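/- arXiv:2605.15970 — 13 statements merged into one kernel-verified Lean document; each statement's English description precedes it below -/
import Mathlib

section
/- If A is an n×n copositive matrix all of whose off-diagonal entries are nonpositive, then A is positive semidefinite. -/
open Matrix

def Copositive {ι : Type*} [Fintype ι] (A : Matrix ι ι ℝ) : Prop :=
  ∀ x : ι → ℝ, (∀ i, 0 ≤ x i) → 0 ≤ x ⬝ᵥ A.mulVec x

def SPN {ι : Type*} [Fintype ι] (A : Matrix ι ι ℝ) : Prop :=
  ∃ P N : Matrix ι ι ℝ, P.PosSemidef ∧ (∀ i j, 0 ≤ N i j) ∧ A = P + N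

def Mn {n : ℕ} (A : Matrix (Fin n) (Fin n) ℝ) : Prop :=
  ∀ i j k l : Fin n, i ≤ k → j ≤ l → i ≠ j → k ≠ l → A i j ≤ A k l

theorem stmt_1 {n : ℕ} (A : Matrix (Fin n) (Fin n) ℝ) (hA : A.IsSymm)
    (hcop : Copositive A) (hoff : ∀ i j : Fin n, i ≠ j → A i j ≤ 0) :
    A.PosSemidef := by
  rw [Matrix.posSemidef_iff_dotProduct_mulVec]
  constructor
  · rw [Matrix.IsHermitian, Matrix.conjTranspose_eq_transpose_of_trivial]
    exact hA
  · intro x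
    simp only [dotProduct, Pi.star_apply, star_trivial] at *
    have key : (fun i => |x i|) ⬝ᵥ A.mulVec (fun i => |x i|) ≤ x ⬝ᵥ A.mulVec x := by
      simp only [dotProduct, Matrix.mulVec, Finset.mul_sum]
      apply Finset.sum_le_sum
      intro i _
      apply Finset.sum_le_sum
      intro j _
      rcases eq_or_ne i j with rfl | hij
      · exact le_of_eq (by rw [mul_left_comm, abs_mul_abs_self, mul_left_comm])
      · have h1 : x i * x j ≤ |x i| * |x j| := by
          rw [← abs_mul]; exact le_abs_self _
        have h2 := mul_le_mul_of_nonpos_left h1 (hoff i j hij)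
        calc |x i| * (A i j * |x j|) = A i j * (|x i| * |x j|) := by ring
          _ ≤ A i j * (x i * x j) := h2
          _ = x i * (A i j * x j) := by ring
    have h0 := hcop (fun i => |x i|) (fun i => abs_nonneg _)
    exact le_trans h0 key
end

section
/- If A is a singular copositive matrix with all nonpositive off-diagonal entries, then there exists a nonzero vector v in the kernel of A with all entries nonnegative. -/
open Matrix

lemma abs_quad_le {n : ℕ} (A : Matrix (Fin n) (Fin n) ℝ)
    (hoff : ∀ i j : Fin n, i ≠ j → A i j ≤ 0) (x : Fin n → ℝ) :
    (fun i => |x i|) ⬝ᵥ A.mulVec (fun i => |x i|) ≤ x ⬝ᵥ A.mulVec x := by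
  simp only [dotProduct, mulVec]
  apply Finset.sum_le_sum
  intro i _
  rw [Finset.mul_sum, Finset.mul_sum]
  apply Finset.sum_le_sum
  intro j _
  rcases eq_or_ne i j with rfl | hij
  · have : |x i| * (A i i * |x i|) = x i * (A i i * x i) := by
      rw [mul_comm (A i i), ← mul_assoc, ← mul_assoc, ← abs_mul, abs_mul_self]; ring
    rw [this]
  · have h1 : A i j ≤ 0 := hoff i j hij
    have h2 : x i * x j ≤ |x i| * |x j| := by
      rw [← abs_mul]; exact le_abs_self _
    have := mul_le_mul_of_nonpos_left h2 h1
    nlinarith [this]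

theorem stmt_2 {n : ℕ} (A : Matrix (Fin n) (Fin n) ℝ) (hA : A.IsSymm)
    (hcop : Copositive A) (hoff : ∀ i j : Fin n, i ≠ j → A i j ≤ 0)
    (hsing : ∃ w : Fin n → ℝ, w ≠ 0 ∧ A.mulVec w = 0) :
    ∃ v : Fin n → ℝ, v ≠ 0 ∧ A.mulVec v = 0 ∧ ∀ i, 0 ≤ v i := by
  obtain ⟨w, hw0, hwk⟩ := hsing
  set v : Fin n → ℝ := fun i => |w i| with hv
  have hvnn : ∀ i, 0 ≤ v i := fun i => abs_nonneg _
  have hpsd : A.PosSemidef := by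
    refine ⟨hA, fun x => ?_⟩
    have h1 := hcop (fun i => |x i|) (fun i => abs_nonneg _)
    have h2 := abs_quad_le A hoff x
    simpa [Finsupp.sum_fintype, dotProduct, mulVec, Finset.mul_sum, mul_assoc] using le_trans h1 h2
  have hq : v ⬝ᵥ A.mulVec v = 0 := by
    have hle : v ⬝ᵥ A.mulVec v ≤ w ⬝ᵥ A.mulVec w := abs_quad_le A hoff w
    have : w ⬝ᵥ A.mulVec w = 0 := by rw [hwk, dotProduct_zero]
    have hge := hcop v hvnn
    linarith
  have hker : A.mulVec v = 0 := by
    have := (hpsd.dotProduct_mulVec_zero_iff v).mp (by simpa using hq)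
    exact this
  refine ⟨v, ?_, hker, hvnn⟩
  intro h
  apply hw0
  funext i
  have : v i = 0 := congrFun h i
  exact abs_eq_zero.mp this
end

section
/- Let A be an n×n positive semidefinite matrix with all off-diagonal entries nonpositive. Then there is a permutation matrix P such that P^T A P is block diagonal with blocks A₁ and A₂, where A₁ is singular and A₂ is positive definite (allowing either block to be empty, i.e., A₁ = A or A₂ = A). -/
open Matrix

lemma aux_abs {n : ℕ} {A : Matrix (Fin n) (Fin n) ℝ} (hA : A.PosSemidef)
    (hoff : ∀ i j, i ≠ j → A i j ≤ 0) {x : Fin n → ℝ} (hx : A *ᵥ x = 0) :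
    A *ᵥ (fun i => |x i|) = 0 := by
  rw [← hA.dotProduct_mulVec_zero_iff]
  have h0 : star x ⬝ᵥ A *ᵥ x = 0 := by rw [hx]; simp
  have hle : star (fun i => |x i|) ⬝ᵥ A *ᵥ (fun i => |x i|) ≤ star x ⬝ᵥ A *ᵥ x := by
    simp only [star_trivial, dotProduct, mulVec, Finset.mul_sum]
    refine Finset.sum_le_sum fun i _ => Finset.sum_le_sum fun j _ => ?_
    rcases eq_or_ne i j with rfl | h
    · refine le_of_eq ?_
      rw [show |x i| * (A i i * |x i|) = A i i * (|x i| * |x i|) from by ring,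
        abs_mul_abs_self]; ring
    · have h1 : A i j ≤ 0 := hoff i j h
      have h2 : x i * x j ≤ |x i| * |x j| := by
        calc x i * x j ≤ |x i * x j| := le_abs_self _
        _ = |x i| * |x j| := abs_mul _ _
      nlinarith
  exact le_antisymm (h0 ▸ hle) (hA.dotProduct_mulVec_nonneg _)

theorem stmt_3 {n : ℕ} (A : Matrix (Fin n) (Fin n) ℝ) (hA : A.PosSemidef)
    (hoff : ∀ i j : Fin n, i ≠ j → A i j ≤ 0) :
    ∃ (k : ℕ) (hk : k ≤ n) (σ : Equiv.Perm (Fin n)),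
      let B : Matrix (Fin n) (Fin n) ℝ := A.submatrix σ σ
      let f : Fin k → Fin n := fun i => ⟨i.1, lt_of_lt_of_le i.2 hk⟩
      let g : Fin (n - k) → Fin n := fun i => ⟨k + i.1, by omega⟩
      (∀ (i : Fin k) (j : Fin (n - k)), B (f i) (g j) = 0 ∧ B (g j) (f i) = 0) ∧
      (k = 0 ∨ (B.submatrix f f).det = 0) ∧
      (B.submatrix g g).PosDef := by
  classical
  have hsymm : ∀ a b, A a b = A b a := fun a b => by
    conv_lhs => rw [← hA.1]
    simp [conjTranspose_apply]
  set S : Finset (Fin n) := Finset.univ.filter (fun i => ∃ x : Fin n → ℝ, A *ᵥ x = 0 ∧ x i ≠ 0)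
    with hSdef
  -- a nonnegative kernel vector with support exactly S
  have hchoice : ∀ i : Fin n, ∃ y : Fin n → ℝ, A *ᵥ y = 0 ∧ (∀ j, 0 ≤ y j) ∧ (i ∈ S → y i ≠ 0) := by
    intro i
    by_cases hi : i ∈ S
    · obtain ⟨x, hx1, hx2⟩ := (Finset.mem_filter.mp hi).2
      exact ⟨fun j => |x j|, aux_abs hA hoff hx1, fun j => abs_nonneg _,
        fun _ => by simpa using hx2⟩
    · exact ⟨0, by simp, by simp, fun h => absurd h hi⟩
  choose y hy1 hy2 hy3 using hchoice
  set z : Fin n → ℝ := fun j => ∑ i, y i j with hzdef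
  have hzker : A *ᵥ z = 0 := by
    have : z = ∑ i, y i := by funext j; simp [hzdef, Finset.sum_apply]
    rw [this]
    simp only [← mulVecLin_apply, map_sum]
    simp [mulVecLin_apply, hy1]
  have hznn : ∀ j, 0 ≤ z j := fun j => Finset.sum_nonneg fun i _ => hy2 i j
  have hmemS : ∀ j, j ∈ S ↔ 0 < z j := by
    intro j
    constructor
    · intro hj
      have h1 : y j j ≤ z j :=
        Finset.single_le_sum (fun i _ => hy2 i j) (Finset.mem_univ j)
      have h2 : 0 < y j j := (hy2 j j).lt_of_ne (Ne.symm (hy3 j hj))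
      linarith
    · intro h
      exact Finset.mem_filter.mpr ⟨Finset.mem_univ _, z, hzker, ne_of_gt h⟩
  have hzout : ∀ j, j ∉ S → z j = 0 := by
    intro j hj
    by_contra h
    exact hj ((hmemS j).mpr ((hznn j).lt_of_ne (Ne.symm h)))
  -- cross entries vanish
  have hcross : ∀ i ∉ S, ∀ j ∈ S, A i j = 0 := by
    intro i hi j hj
    have h0 : ∑ l, A i l * z l = 0 := by
      have := congrFun hzker i
      simpa [mulVec, dotProduct] using this
    have hterm : ∀ l ∈ Finset.univ, A i l * z l ≤ 0 := by
      intro l _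
      by_cases hl : l ∈ S
      · have hne : i ≠ l := fun h => hi (h ▸ hl)
        exact mul_nonpos_of_nonpos_of_nonneg (hoff i l hne) (hznn l)
      · simp [hzout l hl]
    have hall := (Finset.sum_eq_zero_iff_of_nonpos hterm).mp h0
    have := hall j (Finset.mem_univ j)
    have hzj : 0 < z j := (hmemS j).mp hj
    rcases mul_eq_zero.mp this with h | h
    · exact h
    · exact absurd h (ne_of_gt hzj)
  -- build the permutation
  set k : ℕ := S.card with hkdef
  have hk : k ≤ n := by
    simpa using S.card_le_univ.trans (le_of_eq (by simp [Finset.card_univ]))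
  have hkn : k + (n - k) = n := by omega
  have hScc : Sᶜ.card = n - k := by
    rw [Finset.card_compl]; simp [hkdef]
  let eS : Fin k ≃ {x : Fin n // x ∈ S} := (S.orderIsoOfFin rfl).toEquiv
  let eC : Fin (n - k) ≃ {x : Fin n // ¬ x ∈ S} :=
    (Sᶜ.orderIsoOfFin hScc).toEquiv.trans (Equiv.subtypeEquivRight fun x => Finset.mem_compl)
  let E : Fin k ⊕ Fin (n - k) ≃ Fin n :=
    (Equiv.sumCongr eS eC).trans (Equiv.sumCompl (· ∈ S))
  let σ : Equiv.Perm (Fin n) :=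
    ((finCongr hkn.symm).trans finSumFinEquiv.symm).trans E
  refine ⟨k, hk, σ, ?_⟩
  intro B f g
  have hσf : ∀ i : Fin k, σ (f i) = (eS i : Fin n) := by
    intro i
    show E (finSumFinEquiv.symm (finCongr hkn.symm (f i))) = _
    have : finSumFinEquiv.symm (finCongr hkn.symm (f i)) = Sum.inl i := by
      rw [Equiv.symm_apply_eq]
      apply Fin.ext
      simp [f]
    rw [this]
    rfl
  have hσg : ∀ j : Fin (n - k), σ (g j) = (eC j : Fin n) := by
    intro j
    show E (finSumFinEquiv.symm (finCongr hkn.symm (g j))) = _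
    have : finSumFinEquiv.symm (finCongr hkn.symm (g j)) = Sum.inr j := by
      rw [Equiv.symm_apply_eq]
      apply Fin.ext
      simp [g]
    rw [this]
    rfl
  have hfS : ∀ i : Fin k, σ (f i) ∈ S := fun i => by rw [hσf]; exact (eS i).2
  have hgS : ∀ j : Fin (n - k), σ (g j) ∉ S := fun j => by rw [hσg]; exact (eC j).2
  have hE : ∀ F : Fin n → ℝ, ∑ l, F l = (∑ i : Fin k, F (σ (f i))) + ∑ j, F (σ (g j)) := by
    intro F
    have hfi : ∀ i : Fin k, f i = finCongr hkn (finSumFinEquiv (Sum.inl i)) :=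
      fun i => Fin.ext (by simp [f])
    have hgj : ∀ j : Fin (n - k), g j = finCongr hkn (finSumFinEquiv (Sum.inr j)) :=
      fun j => Fin.ext (by simp [g])
    rw [← Equiv.sum_comp σ F, ← Equiv.sum_comp (finSumFinEquiv.trans (finCongr hkn))
      (fun l => F (σ l)), Fintype.sum_sum_type]
    simp only [Equiv.trans_apply, ← hfi, ← hgj]
  refine ⟨?_, ?_, ?_⟩
  · intro i j
    constructor
    · show A (σ (f i)) (σ (g j)) = 0
      rw [hsymm]
      exact hcross _ (hgS j) _ (hfS i)
    · show A (σ (g j)) (σ (f i)) = 0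
      exact hcross _ (hgS j) _ (hfS i)
  · -- singular block
    rcases Nat.eq_zero_or_pos k with hk0 | hk0
    · exact Or.inl hk0
    refine Or.inr ?_
    rw [← exists_mulVec_eq_zero_iff]
    refine ⟨fun i => z (σ (f i)), ?_, ?_⟩
    · have : z (σ (f ⟨0, hk0⟩)) ≠ 0 := ne_of_gt ((hmemS _).mp (hfS ⟨0, hk0⟩))
      intro h
      exact this (congrFun h ⟨0, hk0⟩)
    · funext i
      show ∑ j, A (σ (f i)) (σ (f j)) * z (σ (f j)) = 0
      have h1 := congrFun hzker (σ (f i))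
      have h2 : ∑ l, A (σ (f i)) l * z l = 0 := by
        simpa [mulVec, dotProduct] using h1
      rw [hE (fun l => A (σ (f i)) l * z l)] at h2
      have h3 : ∑ j, A (σ (f i)) (σ (g j)) * z (σ (g j)) = 0 :=
        Finset.sum_eq_zero fun j _ => by rw [hzout _ (hgS j), mul_zero]
      linarith
  · -- positive definite block
    have hC : B.submatrix g g = A.submatrix (fun j => σ (g j)) (fun j => σ (g j)) := by
      rw [show B = A.submatrix σ σ from rfl, submatrix_submatrix]
      rfl
    have hPSD : (B.submatrix g g).PosSemidef := by
      rw [hC]; exact hA.submatrix _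
    refine posDef_iff_dotProduct_mulVec.mpr ⟨hPSD.1, fun x hx => lt_of_le_of_ne (hPSD.dotProduct_mulVec_nonneg x) (Ne.symm ?_)⟩
    intro hq
    -- extend x by zero
    set xh : Fin n → ℝ := fun l => if h : l ∈ S then 0 else x (eC.symm ⟨l, h⟩) with hxh
    have hxg : ∀ j, xh (σ (g j)) = x j := by
      intro j
      rw [hσg]
      simp only [hxh]
      rw [dif_neg (eC j).2]
      rw [Subtype.coe_eta, Equiv.symm_apply_apply]
    have hxf : ∀ i, xh (σ (f i)) = 0 := by
      intro i
      rw [hσf]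
      simp only [hxh]
      rw [dif_pos (eS i).2]
    have hquad : star xh ⬝ᵥ A *ᵥ xh = 0 := by
      have : star x ⬝ᵥ (B.submatrix g g) *ᵥ x = star xh ⬝ᵥ A *ᵥ xh := by
        simp only [star_trivial, dotProduct, mulVec, hC, submatrix_apply]
        rw [hE (fun l => xh l * ∑ m, A l m * xh m)]
        have hz1 : ∑ i : Fin k, xh (σ (f i)) * (∑ m, A (σ (f i)) m * xh m) = 0 :=
          Finset.sum_eq_zero fun i _ => by rw [hxf, zero_mul]
        rw [hz1, zero_add]
        refine Finset.sum_congr rfl fun j _ => ?_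
        rw [hxg]
        congr 1
        rw [hE (fun m => A (σ (g j)) m * xh m)]
        have hz2 : ∑ i : Fin k, A (σ (g j)) (σ (f i)) * xh (σ (f i)) = 0 :=
          Finset.sum_eq_zero fun i _ => by rw [hxf, mul_zero]
        rw [hz2, zero_add]
        exact Finset.sum_congr rfl fun b _ => by rw [hxg]; rfl
      rw [← this, hq]
    have hker : A *ᵥ xh = 0 := (hA.dotProduct_mulVec_zero_iff xh).mp hquad
    apply hx
    funext j
    show x j = 0
    by_contra hxj
    exact hgS j (Finset.mem_filter.mpr ⟨Finset.mem_univ _, xh, hker, by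
      rw [hxg]; exact hxj⟩)
end

section
/- Let A be the symmetric block matrix [[M, F],[F^T, B]] with F entrywise nonnegative. Then A is copositive if and only if both M and B are copositive, and A is SPN if and only if both M and B are SPN. -/
open Matrix

lemma quad_fromBlocks {r m : ℕ} (M : Matrix (Fin r) (Fin r) ℝ) (B : Matrix (Fin m) (Fin m) ℝ)
    (F : Matrix (Fin r) (Fin m) ℝ) (G : Matrix (Fin m) (Fin r) ℝ) (x : Fin r → ℝ) (y : Fin m → ℝ) :
    Sum.elim x y ⬝ᵥ (Matrix.fromBlocks M F G B).mulVec (Sum.elim x y) =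
      x ⬝ᵥ M.mulVec x + x ⬝ᵥ F.mulVec y + (y ⬝ᵥ G.mulVec x + y ⬝ᵥ B.mulVec y) := by
  rw [fromBlocks_mulVec, sumElim_dotProduct_sumElim, dotProduct_add, dotProduct_add]
  simp [Sum.elim_comp_inl, Sum.elim_comp_inr]

lemma psd_blockDiag {r m : ℕ} {P : Matrix (Fin r) (Fin r) ℝ} {Q : Matrix (Fin m) (Fin m) ℝ}
    (hP : P.PosSemidef) (hQ : Q.PosSemidef) :
    (Matrix.fromBlocks P 0 0 Q).PosSemidef := by
  rw [posSemidef_iff_dotProduct_mulVec]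
  constructor
  · show _ = _
    rw [fromBlocks_conjTranspose, hP.1, hQ.1]
    simp
  · intro z
    have := quad_fromBlocks P Q 0 0 (fun i => z (Sum.inl i)) (fun j => z (Sum.inr j))
    have hz : z = Sum.elim (fun i => z (Sum.inl i)) (fun j => z (Sum.inr j)) := by
      funext i; cases i <;> rfl
    rw [show star z = z from rfl, hz, this]
    simp only [Matrix.zero_mulVec, dotProduct_zero, add_zero, zero_add]
    exact add_nonneg (hP.dotProduct_mulVec_nonneg _) (hQ.dotProduct_mulVec_nonneg _)

theorem stmt_4 {r m : ℕ} (M : Matrix (Fin r) (Fin r) ℝ) (B : Matrix (Fin m) (Fin m) ℝ)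
    (F : Matrix (Fin r) (Fin m) ℝ) (hM : M.IsSymm) (hB : B.IsSymm)
    (hF : ∀ i j, 0 ≤ F i j) :
    (Copositive (Matrix.fromBlocks M F Fᵀ B) ↔ Copositive M ∧ Copositive B) ∧
    (SPN (Matrix.fromBlocks M F Fᵀ B) ↔ SPN M ∧ SPN B) := by
  constructor
  · constructor
    · intro h
      constructor
      · intro x hx
        have := h (Sum.elim x 0) (by intro i; cases i <;> simp [hx _])
        rw [quad_fromBlocks] at this
        simpa using this
      · intro y hy
        have := h (Sum.elim 0 y) (by intro i; cases i <;> simp [hy _])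
        rw [quad_fromBlocks] at this
        simpa using this
    · rintro ⟨h1, h2⟩ z hz
      have hz' : z = Sum.elim (fun i => z (Sum.inl i)) (fun j => z (Sum.inr j)) := by
        funext i; cases i <;> rfl
      rw [hz', quad_fromBlocks]
      have hF' : 0 ≤ (fun i => z (Sum.inl i)) ⬝ᵥ F.mulVec (fun j => z (Sum.inr j)) := by
        simp only [dotProduct, mulVec]
        exact Finset.sum_nonneg fun i _ => mul_nonneg (hz _)
          (Finset.sum_nonneg fun j _ => mul_nonneg (hF i j) (hz _))
      have hFt : 0 ≤ (fun j => z (Sum.inr j)) ⬝ᵥ Fᵀ.mulVec (fun i => z (Sum.inl i)) := by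
        simp only [dotProduct, mulVec, transpose_apply]
        exact Finset.sum_nonneg fun i _ => mul_nonneg (hz _)
          (Finset.sum_nonneg fun j _ => mul_nonneg (hF j i) (hz _))
      have hMq := h1 (fun i => z (Sum.inl i)) (fun i => hz _)
      have hBq := h2 (fun j => z (Sum.inr j)) (fun j => hz _)
      linarith
  · constructor
    · rintro ⟨P, N, hP, hN, hA⟩
      constructor
      · refine ⟨P.submatrix Sum.inl Sum.inl, N.submatrix Sum.inl Sum.inl,
          hP.submatrix _, fun i j => hN _ _, ?_⟩
        have := congrArg (fun A => A.submatrix (Sum.inl : Fin r → Fin r ⊕ Fin m) Sum.inl) hA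
        exact this
      · refine ⟨P.submatrix Sum.inr Sum.inr, N.submatrix Sum.inr Sum.inr,
          hP.submatrix _, fun i j => hN _ _, ?_⟩
        have := congrArg (fun A => A.submatrix (Sum.inr : Fin m → Fin r ⊕ Fin m) Sum.inr) hA
        exact this
    · rintro ⟨⟨P1, N1, hP1, hN1, hM1⟩, ⟨P2, N2, hP2, hN2, hB2⟩⟩
      refine ⟨Matrix.fromBlocks P1 0 0 P2, Matrix.fromBlocks N1 F Fᵀ N2,
        psd_blockDiag hP1 hP2, ?_, ?_⟩
      · rintro (i | i) (j | j) <;> simp [hN1, hN2, hF]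
      · rw [hM1, hB2]
        ext (i | i) (j | j) <;> simp [fromBlocks]
end

section
/- Let A = [[M, F],[F^T, B]] be symmetric with F entrywise nonpositive and M an invertible copositive matrix with negative off-diagonal entries. Then A is copositive if and only if the Schur complement A/M = B − F^T M^{−1} F is copositive. -/
open Matrix

section Aux

variable {r : ℕ}

/-- A copositive matrix with nonpositive off-diagonal entries has nonnegative
quadratic form on all of ℝ^r. -/
lemma quad_nonneg_of_copositive (M : Matrix (Fin r) (Fin r) ℝ)
    (hMcop : Copositive M) (hMoff : ∀ i j : Fin r, i ≠ j → M i j < 0)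
    (x : Fin r → ℝ) : 0 ≤ x ⬝ᵥ M *ᵥ x := by
  have h1 : (fun i => |x i|) ⬝ᵥ M *ᵥ (fun i => |x i|) ≤ x ⬝ᵥ M *ᵥ x := by
    simp only [dotProduct, mulVec, dotProduct, Finset.mul_sum]
    refine Finset.sum_le_sum fun i _ => Finset.sum_le_sum fun j _ => ?_
    by_cases hij : i = j
    · subst hij
      have : |x i| * (M i i * |x i|) = M i i * (|x i| * |x i|) := by ring
      rw [this, abs_mul_abs_self]
      ring_nf
      exact le_of_eq rfl
    · have hMij : M i j < 0 := hMoff i j hij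
      have h2 : x i * x j ≤ |x i| * |x j| := by
        calc x i * x j ≤ |x i * x j| := le_abs_self _
        _ = |x i| * |x j| := abs_mul _ _
      nlinarith [h2, hMij]
  have h2 : 0 ≤ (fun i => |x i|) ⬝ᵥ M *ᵥ (fun i => |x i|) :=
    hMcop _ (fun i => abs_nonneg _)
  linarith

lemma eq_zero_of_quad_eq_zero (M : Matrix (Fin r) (Fin r) ℝ) (hM : M.IsSymm)
    (hMinv : IsUnit M.det) (hMcop : Copositive M)
    (hMoff : ∀ i j : Fin r, i ≠ j → M i j < 0)
    (x : Fin r → ℝ) (hx : x ⬝ᵥ M *ᵥ x = 0) : x = 0 := by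
  have hPSD : M.PosSemidef := by
    refine Matrix.posSemidef_iff_dotProduct_mulVec.mpr ⟨?_, fun y => ?_⟩
    · rwa [Matrix.IsHermitian, Matrix.conjTranspose_eq_transpose_of_trivial]
    · simpa using quad_nonneg_of_copositive M hMcop hMoff y
  have hMx : M *ᵥ x = 0 := by
    have := (hPSD.dotProduct_mulVec_zero_iff x).mp (by simpa using hx)
    exact this
  have : M⁻¹ *ᵥ (M *ᵥ x) = 0 := by rw [hMx, Matrix.mulVec_zero]
  rwa [Matrix.mulVec_mulVec, Matrix.nonsing_inv_mul M hMinv, Matrix.one_mulVec] at this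

/-- The inverse of a copositive Z-matrix maps nonnegative vectors to nonnegative
vectors. -/
lemma inv_mulVec_nonneg (M : Matrix (Fin r) (Fin r) ℝ) (hM : M.IsSymm)
    (hMinv : IsUnit M.det) (hMcop : Copositive M)
    (hMoff : ∀ i j : Fin r, i ≠ j → M i j < 0)
    (v : Fin r → ℝ) (hv : ∀ i, 0 ≤ v i) : ∀ i, 0 ≤ (M⁻¹ *ᵥ v) i := by
  set u : Fin r → ℝ := M⁻¹ *ᵥ v with hu
  have hMu : M *ᵥ u = v := by
    rw [hu, Matrix.mulVec_mulVec, Matrix.mul_nonsing_inv M hMinv, Matrix.one_mulVec]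
  set p : Fin r → ℝ := fun i => max (u i) 0 with hp
  set q : Fin r → ℝ := fun i => max (-u i) 0 with hqdef
  have hupq : u = p - q := by
    funext i
    simp only [hp, hqdef, Pi.sub_apply]
    exact (max_zero_sub_max_neg_zero_eq_self (u i)).symm
  have hqnn : ∀ i, 0 ≤ q i := fun i => le_max_right _ _
  have hpnn : ∀ i, 0 ≤ p i := fun i => le_max_right _ _
  -- 0 ≤ q ⬝ᵥ v
  have h1 : 0 ≤ q ⬝ᵥ v :=
    Finset.sum_nonneg fun i _ => mul_nonneg (hqnn i) (hv i)
  -- q ⬝ᵥ (M *ᵥ p) ≤ 0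
  have h2 : q ⬝ᵥ (M *ᵥ p) ≤ 0 := by
    simp only [dotProduct, mulVec, dotProduct, Finset.mul_sum]
    refine Finset.sum_nonpos fun i _ => Finset.sum_nonpos fun j _ => ?_
    by_cases hqi : q i = 0
    · simp [hqi]
    by_cases hpj : p j = 0
    · simp [hpj]
    have hqi' : 0 < q i := lt_of_le_of_ne (hqnn i) (Ne.symm hqi)
    have hpj' : 0 < p j := lt_of_le_of_ne (hpnn j) (Ne.symm hpj)
    have hui : u i < 0 := by
      by_contra h
      push_neg at h
      have : q i = 0 := by simp [hqdef, max_eq_right, neg_nonpos.mpr h]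
      exact hqi this
    have huj : 0 < u j := by
      by_contra h
      push_neg at h
      have : p j = 0 := by simp [hp, max_eq_right h]
      exact hpj this
    have hij : i ≠ j := fun h => by rw [h] at hui; linarith
    have hM' : M i j < 0 := hMoff i j hij
    exact le_of_lt (mul_neg_of_pos_of_neg hqi' (mul_neg_of_neg_of_pos hM' hpj'))
  -- q ⬝ᵥ (M *ᵥ q) ≤ 0
  have h3 : q ⬝ᵥ (M *ᵥ q) ≤ 0 := by
    have : q ⬝ᵥ v = q ⬝ᵥ (M *ᵥ p) - q ⬝ᵥ (M *ᵥ q) := by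
      rw [← hMu, hupq, Matrix.mulVec_sub, dotProduct_sub]
    linarith
  have h4 : 0 ≤ q ⬝ᵥ (M *ᵥ q) := quad_nonneg_of_copositive M hMcop hMoff q
  have hq0 : q = 0 := eq_zero_of_quad_eq_zero M hM hMinv hMcop hMoff q (le_antisymm h3 h4)
  intro i
  show 0 ≤ u i
  have : u i = p i := by rw [hupq, hq0]; simp
  rw [this]
  exact hpnn i

end Aux

theorem stmt_5 {r m : ℕ} (M : Matrix (Fin r) (Fin r) ℝ) (B : Matrix (Fin m) (Fin m) ℝ)
    (F : Matrix (Fin r) (Fin m) ℝ) (hM : M.IsSymm) (hB : B.IsSymm)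
    (hMinv : IsUnit M.det) (hMcop : Copositive M)
    (hMoff : ∀ i j : Fin r, i ≠ j → M i j < 0)
    (hF : ∀ i j, F i j ≤ 0) :
    Copositive (Matrix.fromBlocks M F Fᵀ B) ↔ Copositive (B - Fᵀ * M⁻¹ * F) := by
  constructor
  · -- forward direction
    intro hA y hy
    set v : Fin r → ℝ := -(F *ᵥ y) with hvdef
    have hvnn : ∀ i, 0 ≤ v i := by
      intro i
      simp only [hvdef, Pi.neg_apply, neg_nonneg, Matrix.mulVec, dotProduct]
      exact Finset.sum_nonpos fun j _ => mul_nonpos_of_nonpos_of_nonneg (hF i j) (hy j)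
    set x : Fin r → ℝ := M⁻¹ *ᵥ v with hxdef
    have hxnn : ∀ i, 0 ≤ x i := inv_mulVec_nonneg M hM hMinv hMcop hMoff v hvnn
    have hMx : M *ᵥ x = v := by
      rw [hxdef, Matrix.mulVec_mulVec, Matrix.mul_nonsing_inv M hMinv, Matrix.one_mulVec]
    have hz : ∀ i, 0 ≤ Sum.elim x y i := by rintro (i | j); exacts [hxnn i, hy j]
    have key := hA (Sum.elim x y) hz
    rw [Matrix.fromBlocks_mulVec] at key
    simp only [Sum.elim_comp_inl, Sum.elim_comp_inr] at key
    rw [sumElim_dotProduct_sumElim] at key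
    rw [dotProduct_add, dotProduct_add, hMx] at key
    have hx0 : x ⬝ᵥ v + x ⬝ᵥ (F *ᵥ y) = 0 := by
      rw [hvdef, dotProduct_neg]; ring
    -- y ⬝ᵥ Fᵀ *ᵥ x = - y ⬝ᵥ (Fᵀ * M⁻¹ * F) *ᵥ y
    have hxg : x = -(M⁻¹ *ᵥ (F *ᵥ y)) := by
      rw [hxdef, hvdef, Matrix.mulVec_neg]
    have hFx : y ⬝ᵥ (Fᵀ *ᵥ x) = -(y ⬝ᵥ ((Fᵀ * M⁻¹ * F) *ᵥ y)) := by
      rw [hxg, Matrix.mulVec_neg, dotProduct_neg]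
      congr 2
      rw [Matrix.mulVec_mulVec, Matrix.mulVec_mulVec, Matrix.mul_assoc]
    rw [hFx] at key
    show 0 ≤ y ⬝ᵥ (B - Fᵀ * M⁻¹ * F) *ᵥ y
    rw [Matrix.sub_mulVec, dotProduct_sub]
    linarith
  · -- backward direction
    intro hS z hz
    set x : Fin r → ℝ := z ∘ Sum.inl with hxdef
    set y : Fin m → ℝ := z ∘ Sum.inr with hydef
    have hzel : z = Sum.elim x y := by funext i; cases i <;> rfl
    show 0 ≤ z ⬝ᵥ Matrix.fromBlocks M F Fᵀ B *ᵥ z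
    rw [hzel, Matrix.fromBlocks_mulVec]
    simp only [Sum.elim_comp_inl, Sum.elim_comp_inr]
    rw [sumElim_dotProduct_sumElim, dotProduct_add, dotProduct_add]
    set g : Fin r → ℝ := M⁻¹ *ᵥ (F *ᵥ y) with hgdef
    have hMg : M *ᵥ g = F *ᵥ y := by
      rw [hgdef, Matrix.mulVec_mulVec, Matrix.mul_nonsing_inv M hMinv, Matrix.one_mulVec]
    -- symmetry facts
    have hsym : ∀ a b : Fin r → ℝ, a ⬝ᵥ (M *ᵥ b) = b ⬝ᵥ (M *ᵥ a) := by
      intro a b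
      rw [Matrix.dotProduct_mulVec, ← Matrix.mulVec_transpose, hM.eq, dotProduct_comm]
    have hFtrans : y ⬝ᵥ (Fᵀ *ᵥ x) = x ⬝ᵥ (F *ᵥ y) := by
      rw [Matrix.dotProduct_mulVec, ← Matrix.mulVec_transpose, Matrix.transpose_transpose,
        dotProduct_comm]
    have hFtransg : y ⬝ᵥ (Fᵀ *ᵥ g) = g ⬝ᵥ (F *ᵥ y) := by
      rw [Matrix.dotProduct_mulVec, ← Matrix.mulVec_transpose, Matrix.transpose_transpose,
        dotProduct_comm]
    -- expand (x+g) ⬝ᵥ M (x+g)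
    have hw : (x + g) ⬝ᵥ (M *ᵥ (x + g)) =
        x ⬝ᵥ (M *ᵥ x) + 2 * (x ⬝ᵥ (F *ᵥ y)) + g ⬝ᵥ (F *ᵥ y) := by
      rw [Matrix.mulVec_add, dotProduct_add, add_dotProduct, add_dotProduct, hsym g x, hMg]
      ring
    have hSchur : y ⬝ᵥ ((B - Fᵀ * M⁻¹ * F) *ᵥ y) =
        y ⬝ᵥ (B *ᵥ y) - g ⬝ᵥ (F *ᵥ y) := by
      rw [Matrix.sub_mulVec, dotProduct_sub]
      congr 1
      rw [← hFtransg]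
      congr 1
      rw [hgdef, Matrix.mulVec_mulVec, Matrix.mulVec_mulVec, Matrix.mul_assoc]
    have hpos1 : 0 ≤ (x + g) ⬝ᵥ (M *ᵥ (x + g)) :=
      quad_nonneg_of_copositive M hMcop hMoff _
    have hpos2 : 0 ≤ y ⬝ᵥ ((B - Fᵀ * M⁻¹ * F) *ᵥ y) := by
      exact hS y (fun j => hz (Sum.inr j))
    rw [hw] at hpos1
    rw [hSchur] at hpos2
    rw [hFtrans]
    linarith
end

section
/- If A is an n×n copositive matrix that has a positive semidefinite principal submatrix of order n−1, then A is SPN. -/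
open Matrix

open Finset
open scoped Pointwise

lemma dot_cs {n : ℕ} (x y : Fin n → ℝ) : (x ⬝ᵥ y) ^ 2 ≤ (x ⬝ᵥ x) * (y ⬝ᵥ y) := by
  have h := real_inner_mul_inner_self_le (F := EuclideanSpace ℝ (Fin n)) (WithLp.toLp 2 x) (WithLp.toLp 2 y)
  simp only [PiLp.inner_apply, RCLike.inner_apply, conj_trivial] at h
  simpa [PiLp.inner_apply, RCLike.inner_apply, dotProduct, sq, mul_comm] using h

lemma inner_eq_dot {n : ℕ} (x y : EuclideanSpace ℝ (Fin n)) :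
    (inner ℝ x y : ℝ) = (x : Fin n → ℝ) ⬝ᵥ (y : Fin n → ℝ) := by
  simp [PiLp.inner_apply, RCLike.inner_apply, dotProduct, mul_comm]

lemma dot_self_nonneg {n : ℕ} (x : Fin n → ℝ) : 0 ≤ x ⬝ᵥ x :=
  Finset.sum_nonneg fun i _ => mul_self_nonneg _

lemma sep {n : ℕ} (a : ℝ) (ha : 0 ≤ a) (M : Matrix (Fin n) (Fin n) ℝ) (b : Fin n → ℝ)
    (hstar : ∀ x : Fin n → ℝ, (∀ i, 0 ≤ x i) → b ⬝ᵥ x < 0 →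
      (b ⬝ᵥ x) ^ 2 ≤ a * (M.mulVec x ⬝ᵥ M.mulVec x)) :
    ∃ y q : Fin n → ℝ, y ⬝ᵥ y ≤ a ∧ (∀ i, 0 ≤ q i) ∧ b = Mᵀ.mulVec y + q := by
  classical
  set E := EuclideanSpace ℝ (Fin n) with hE
  let toE : (Fin n → ℝ) → E := (WithLp.equiv 2 (Fin n → ℝ)).symm
  -- the linear map y ↦ Mᵀ y as a map E → E
  let f : E →ₗ[ℝ] E := (WithLp.linearEquiv 2 ℝ (Fin n → ℝ)).symm.toLinearMap ∘ₗ
    Mᵀ.mulVecLin ∘ₗ (WithLp.linearEquiv 2 ℝ (Fin n → ℝ)).toLinearMap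
  have hf : ∀ y : E, (f y : Fin n → ℝ) = Mᵀ.mulVec (y : Fin n → ℝ) := fun y => rfl
  let T : Set E := f '' (Metric.closedBall 0 (Real.sqrt a))
  let P : Set E := {z | ∀ i, 0 ≤ z i}
  let S : Set E := T + P
  have hT0 : (0 : E) ∈ T := ⟨0, by simpa using Real.sqrt_nonneg a, by simp⟩
  have hP0 : (0 : E) ∈ P := fun i => le_refl _
  have hmemS : ∀ u ∈ T, ∀ p ∈ P, u + p ∈ S := fun u hu p hp => Set.add_mem_add hu hp
  have hSne : S.Nonempty := ⟨0, by simpa using hmemS 0 hT0 0 hP0⟩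
  have hTconv : Convex ℝ T := (convex_closedBall _ _).linear_image f
  have hPconv : Convex ℝ P := by
    intro z hz w hw s t hs ht hst i
    have : (s • z + t • w) i = s * z i + t * w i := rfl
    rw [this]
    exact add_nonneg (mul_nonneg hs (hz i)) (mul_nonneg ht (hw i))
  have hSconv : Convex ℝ S := hTconv.add hPconv
  have hTcomp : IsCompact T := (isCompact_closedBall _ _).image f.continuous_of_finiteDimensional
  have hPcl : IsClosed P := by
    have : P = ⋂ i, (fun z : E => z i) ⁻¹' Set.Ici 0 := by
      ext z; simp [P, Set.mem_iInter]
    rw [this]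
    exact isClosed_iInter fun i =>
      IsClosed.preimage ((continuous_apply i).comp (PiLp.continuous_ofLp 2 _)) isClosed_Ici
  have hScl : IsClosed S := hPcl.add_left_of_isCompact hTcomp
  -- membership of b in S gives the conclusion
  by_cases hbS : toE b ∈ S
  · obtain ⟨u, ⟨y, hy, rfl⟩, p, hp, hup⟩ := hbS
    refine ⟨y, p, ?_, hp, ?_⟩
    · have hny : ‖y‖ ≤ Real.sqrt a := by simpa using hy
      have : (y : Fin n → ℝ) ⬝ᵥ y = ‖y‖ ^ 2 := by
        rw [← real_inner_self_eq_norm_sq, inner_eq_dot]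
      rw [this]
      calc ‖y‖ ^ 2 ≤ Real.sqrt a ^ 2 := by
            exact pow_le_pow_left₀ (norm_nonneg _) hny 2
        _ = a := Real.sq_sqrt ha
    · funext i
      exact congrFun (congrArg (WithLp.equiv 2 (Fin n → ℝ)) hup).symm i
  -- otherwise derive a contradiction with hstar
  exfalso
  obtain ⟨z, hzS, hproj⟩ :=
    exists_norm_eq_iInf_of_complete_convex hSne (hScl.isComplete) hSconv (toE b)
  have hchar := (norm_eq_iInf_iff_real_inner_le_zero hSconv hzS).mp hproj
  set l : Fin n → ℝ := fun i => b i - (z : Fin n → ℝ) i with hl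
  have hinner : ∀ w : E, (inner ℝ (toE b - z) (w - z) : ℝ) = l ⬝ᵥ (fun i => w i - z i) := by
    intro w
    rw [inner_eq_dot]
    rfl
  -- l ≤ 0 componentwise
  have hlnp : ∀ i, l i ≤ 0 := by
    intro i
    obtain ⟨u, hu, p, hp, hupz⟩ := hzS
    have hw : z + (toE (Pi.single i 1)) ∈ S := by
      rw [← hupz]
      rw [add_assoc]
      refine hmemS u hu _ ?_
      intro j
      show (0:ℝ) ≤ p j + (Pi.single i (1:ℝ) : Fin n → ℝ) j
      refine add_nonneg (hp j) ?_
      by_cases h : j = i <;> simp [h, Pi.single_apply]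
    have := hchar _ hw
    rw [hinner] at this
    have heq : (fun j => (z + toE (Pi.single i 1)) j - z j)
        = Pi.single i 1 := by
      funext j
      show z j + (Pi.single i (1:ℝ) : Fin n → ℝ) j - z j = (Pi.single i (1:ℝ) : Fin n → ℝ) j
      ring
    rw [heq, dotProduct_single] at this
    simpa using this
  -- l is nonzero
  have hlne : l ≠ 0 := by
    intro h
    apply hbS
    have : toE b = z := by
      ext i
      have := congrFun h i
      simp only [hl] at this
      have h2 : b i - z i = 0 := this
      show b i = z i
      linarith
    rw [this]; exact hzS
  have hL : 0 < l ⬝ᵥ l := by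
    rcases lt_or_eq_of_le (dot_self_nonneg l) with h | h
    · exact h
    · exact absurd (dotProduct_self_eq_zero.mp h.symm) hlne
  set β : ℝ := l ⬝ᵥ (fun i => z i) with hβ
  have hβ0 : 0 ≤ β := by
    have h0S : (0 : E) ∈ S := by simpa using hmemS 0 hT0 0 hP0
    have := hchar 0 h0S
    rw [hinner] at this
    have heq : (fun i => (0 : E) i - z i) = -(fun i => z i) := by
      funext i
      show (0:ℝ) - z i = -(z i)
      ring
    rw [heq, dotProduct_neg] at this
    linarith
  -- bound on the linear functional over the ellipsoid
  have hTle : ∀ y : Fin n → ℝ, y ⬝ᵥ y ≤ a → l ⬝ᵥ Mᵀ.mulVec y ≤ β := by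
    intro y hy
    have hyn : toE y ∈ Metric.closedBall (0 : E) (Real.sqrt a) := by
      rw [Metric.mem_closedBall, dist_zero_right, Real.le_sqrt (norm_nonneg _) ha]
      rw [← real_inner_self_eq_norm_sq (x := toE y), inner_eq_dot]
      exact hy
    have hwS : f (toE y) ∈ S := by
      have := hmemS _ ⟨toE y, hyn, rfl⟩ 0 hP0
      simpa using this
    have := hchar _ hwS
    rw [hinner] at this
    have heq : (fun i => f (toE y) i - z i) = Mᵀ.mulVec y - (fun i => z i) := by
      funext i
      show Mᵀ.mulVec y i - z i = _
      simp [Pi.sub_apply]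
    rw [heq, dotProduct_sub] at this
    linarith
  -- the vector x = -l is nonnegative and violates hstar
  set x : Fin n → ℝ := -l with hx
  have hxnn : ∀ i, 0 ≤ x i := fun i => by
    have := hlnp i; simp [hx]; linarith
  set m : Fin n → ℝ := M.mulVec x with hm
  have hMl : M.mulVec l = -m := by
    rw [hm, hx, Matrix.mulVec_neg, neg_neg]
  have hdotM : ∀ y : Fin n → ℝ, l ⬝ᵥ Mᵀ.mulVec y = (-m) ⬝ᵥ y := by
    intro y
    rw [dotProduct_mulVec, ← hMl, ← Matrix.mulVec_transpose, Matrix.transpose_transpose]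
  have hmm : 0 ≤ m ⬝ᵥ m := dot_self_nonneg m
  have hamm : 0 ≤ a * (m ⬝ᵥ m) := mul_nonneg ha hmm
  -- β dominates sqrt (a * m⬝ᵥm)
  have hkey : Real.sqrt (a * (m ⬝ᵥ m)) ≤ β := by
    rcases eq_or_lt_of_le hmm with h0 | h0
    · rw [← h0, mul_zero, Real.sqrt_zero]; exact hβ0
    · set s := m ⬝ᵥ m with hs
      have hsne : s ≠ 0 := ne_of_gt h0
      set c : ℝ := -(Real.sqrt (a / s)) with hc
      have hc2 : c ^ 2 = a / s := by
        rw [hc, neg_sq, Real.sq_sqrt (by positivity)]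
      have hys : (c • m) ⬝ᵥ (c • m) ≤ a := by
        rw [smul_dotProduct, dotProduct_smul, smul_eq_mul, smul_eq_mul, ← mul_assoc, ← sq, hc2,
          ← hs, div_mul_cancel₀ a hsne]
      have h1 := hTle (c • m) hys
      rw [hdotM] at h1
      have h3 : (-m) ⬝ᵥ (c • m) = -(c * s) := by
        rw [dotProduct_smul, smul_eq_mul, neg_dotProduct, ← hs]; ring
      have h2 : Real.sqrt (a / s) * s = Real.sqrt (a * s) := by
        rw [show a * s = a / s * s ^ 2 by field_simp,
          Real.sqrt_mul (by positivity) (s ^ 2), Real.sqrt_sq h0.le]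
      have h4 : -(c * s) = Real.sqrt (a * s) := by rw [hc, ← h2]; ring
      rw [h3, h4] at h1
      exact h1
  -- contradiction with hstar
  have hbx : b ⬝ᵥ x = -(l ⬝ᵥ l) - β := by
    have hb : b = l + (fun i => z i) := by
      funext i; simp [hl]
    rw [hb, add_dotProduct, hx, dotProduct_neg, dotProduct_neg,
      dotProduct_comm (fun i => (z : Fin n → ℝ) i) l, ← hβ]
    ring
  have hbxneg : b ⬝ᵥ x < 0 := by rw [hbx]; linarith
  have hfin := hstar x hxnn hbxneg
  rw [← hm, hbx] at hfin
  have hsq : Real.sqrt (a * (m ⬝ᵥ m)) ^ 2 = a * (m ⬝ᵥ m) := Real.sq_sqrt hamm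
  nlinarith [Real.sqrt_nonneg (a * (m ⬝ᵥ m)), hkey, hL, hβ0, hsq, hfin]

open scoped MatrixOrder in
lemma key {n : ℕ} {B : Matrix (Fin n) (Fin n) ℝ} (hB : B.PosSemidef) (a : ℝ) (b : Fin n → ℝ)
    (hcop : ∀ (t : ℝ) (x : Fin n → ℝ), 0 ≤ t → (∀ i, 0 ≤ x i) →
      0 ≤ a * t ^ 2 + 2 * t * (b ⬝ᵥ x) + x ⬝ᵥ B.mulVec x) :
    ∃ p : Fin n → ℝ, (∀ i, 0 ≤ p i) ∧ ∀ (t : ℝ) (x : Fin n → ℝ),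
      0 ≤ a * t ^ 2 + 2 * t * ((b - p) ⬝ᵥ x) + x ⬝ᵥ B.mulVec x := by
  classical
  have ha : 0 ≤ a := by
    have := hcop 1 0 zero_le_one (fun i => le_refl 0)
    simpa using this
  set M := CFC.sqrt B with hM
  have hMh : Mᵀ = M := by
    have h := (CFC.sqrt_nonneg B).posSemidef.1
    rw [Matrix.IsHermitian, conjTranspose] at h
    ext i j
    have := congrFun (congrFun h i) j
    simpa [hM] using this
  have hMM : M * M = B := by
    have := CFC.sq_sqrt B hB.nonneg
    rwa [pow_two] at this
  have hq : ∀ x : Fin n → ℝ, x ⬝ᵥ B.mulVec x = M.mulVec x ⬝ᵥ M.mulVec x := by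
    intro x
    rw [← hMM, ← Matrix.mulVec_mulVec, dotProduct_mulVec, ← Matrix.mulVec_transpose, hMh]
  have hstar : ∀ x : Fin n → ℝ, (∀ i, 0 ≤ x i) → b ⬝ᵥ x < 0 →
      (b ⬝ᵥ x) ^ 2 ≤ a * (M.mulVec x ⬝ᵥ M.mulVec x) := by
    intro x hx hbx
    set q := x ⬝ᵥ B.mulVec x with hqd
    have hq0 : 0 ≤ q := by
      have := hB.dotProduct_mulVec_nonneg x
      simpa using this
    rw [← hq, ← hqd]
    set s := -(b ⬝ᵥ x) with hs
    have hs0 : 0 < s := by simp [hs]; linarith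
    have hbs : b ⬝ᵥ x = -s := by rw [hs]; ring
    have hsne : s ≠ 0 := ne_of_gt hs0
    rcases eq_or_lt_of_le ha with h0 | h0
    · exfalso
      have h1 := hcop ((q + 1) / (2 * s)) x (by positivity) hx
      rw [← h0, hbs] at h1
      have h2 : 2 * ((q + 1) / (2 * s)) * (-s) = -(q + 1) := by
        field_simp
      rw [h2] at h1
      nlinarith [h1]
    · have hane : a ≠ 0 := ne_of_gt h0
      have h1 := hcop (s / a) x (by positivity) hx
      rw [hbs] at h1
      have h3 : a * (s / a) ^ 2 + 2 * (s / a) * (-s) = -(s ^ 2) / a := by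
        field_simp
        ring
      rw [h3] at h1
      have h5 : s ^ 2 / a ≤ q := by
        have : -(s ^ 2) / a = -(s ^ 2 / a) := by ring
        rw [this] at h1
        linarith
      rw [div_le_iff₀ h0] at h5
      have h2 : (b ⬝ᵥ x) ^ 2 = s ^ 2 := by rw [hbs]; ring
      rw [h2]
      linarith
  obtain ⟨y, p, hy, hp, hbp⟩ := sep a ha M b hstar
  refine ⟨p, hp, ?_⟩
  intro t x
  have hc : (b - p) ⬝ᵥ x = M.mulVec x ⬝ᵥ y := by
    have : b - p = Mᵀ.mulVec y := by rw [hbp]; ring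
    rw [this, hMh, dotProduct_comm, dotProduct_mulVec, ← Matrix.mulVec_transpose, hMh,
      dotProduct_comm]
  set q := x ⬝ᵥ B.mulVec x with hqd
  have hq0 : 0 ≤ q := by
    have := hB.dotProduct_mulVec_nonneg x
    simpa using this
  set r := (b - p) ⬝ᵥ x with hr
  have hr2 : r ^ 2 ≤ a * q := by
    rw [hc]
    calc (M.mulVec x ⬝ᵥ y) ^ 2 ≤ (M.mulVec x ⬝ᵥ M.mulVec x) * (y ⬝ᵥ y) := dot_cs _ _
      _ ≤ (M.mulVec x ⬝ᵥ M.mulVec x) * a := by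
          have := dot_self_nonneg (M.mulVec x)
          exact mul_le_mul_of_nonneg_left hy this
      _ = a * q := by rw [hqd, hq x]; ring
  rcases eq_or_lt_of_le hq0 with h0 | h0
  · have hr0 : r = 0 := by
      have : r ^ 2 ≤ 0 := by rw [← h0] at hr2; linarith [hr2, mul_zero a]
      nlinarith [sq_nonneg r]
    rw [hr0, ← h0]
    have : 0 ≤ a * t ^ 2 := by positivity
    linarith
  · nlinarith [sq_nonneg (t * r + q), mul_nonneg (sq_nonneg t) (sub_nonneg.mpr hr2), h0]

lemma quad {n : ℕ} (A : Matrix (Fin (n + 1)) (Fin (n + 1)) ℝ) (hA : A.IsSymm)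
    (i₀ : Fin (n + 1)) (v : Fin (n + 1) → ℝ) :
    v ⬝ᵥ A.mulVec v = A i₀ i₀ * (v i₀) ^ 2
      + 2 * v i₀ * ((fun j => A i₀ (i₀.succAbove j)) ⬝ᵥ (v ∘ i₀.succAbove))
      + (v ∘ i₀.succAbove) ⬝ᵥ (A.submatrix i₀.succAbove i₀.succAbove).mulVec
          (v ∘ i₀.succAbove) := by
  have hsym : ∀ i, A (i₀.succAbove i) i₀ = A i₀ (i₀.succAbove i) := by
    intro i
    rw [← hA.apply]
  have hrow : ∀ i : Fin (n + 1), (∑ j, A i j * v j)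
      = A i i₀ * v i₀ + ∑ j, A i (i₀.succAbove j) * v (i₀.succAbove j) :=
    fun i => Fin.sum_univ_succAbove (fun j => A i j * v j) i₀
  have hlhs : v ⬝ᵥ A.mulVec v = ∑ i, v i * ∑ j, A i j * v j := by
    simp [dotProduct, Matrix.mulVec, Finset.mul_sum]
  rw [hlhs, Fin.sum_univ_succAbove (fun i => v i * ∑ j, A i j * v j) i₀]
  simp only [hrow]
  set s₁ := ∑ j, A i₀ (i₀.succAbove j) * v (i₀.succAbove j) with hs₁
  have hcross : ∑ i, v (i₀.succAbove i) * (A (i₀.succAbove i) i₀ * v i₀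
      + ∑ j, A (i₀.succAbove i) (i₀.succAbove j) * v (i₀.succAbove j))
      = s₁ * v i₀ + ∑ i, v (i₀.succAbove i)
          * ∑ j, A (i₀.succAbove i) (i₀.succAbove j) * v (i₀.succAbove j) := by
    simp only [mul_add]
    rw [Finset.sum_add_distrib]
    congr 1
    rw [hs₁, Finset.sum_mul]
    refine Finset.sum_congr rfl fun i _ => ?_
    rw [hsym]
    ring
  rw [hcross]
  have hd1 : (fun j => A i₀ (i₀.succAbove j)) ⬝ᵥ (v ∘ i₀.succAbove) = s₁ := by
    simp [dotProduct, hs₁, Function.comp]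
  have hd2 : (v ∘ i₀.succAbove) ⬝ᵥ (A.submatrix i₀.succAbove i₀.succAbove).mulVec
      (v ∘ i₀.succAbove) = ∑ i, v (i₀.succAbove i)
        * ∑ j, A (i₀.succAbove i) (i₀.succAbove j) * v (i₀.succAbove j) := by
    simp [dotProduct, Matrix.mulVec, Function.comp, Matrix.submatrix_apply]
  rw [hd1, hd2]
  ring

theorem stmt_aux {n : ℕ} (A : Matrix (Fin (n + 1)) (Fin (n + 1)) ℝ) (hA : A.IsSymm)
    (hcop : ∀ x : Fin (n+1) → ℝ, (∀ i, 0 ≤ x i) → 0 ≤ x ⬝ᵥ A.mulVec x)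
    (hsub : ∃ i : Fin (n + 1), (A.submatrix i.succAbove i.succAbove).PosSemidef) :
    ∃ P N : Matrix (Fin (n+1)) (Fin (n+1)) ℝ, P.PosSemidef ∧ (∀ i j, 0 ≤ N i j) ∧ A = P + N := by
  classical
  obtain ⟨i₀, hB⟩ := hsub
  set a : ℝ := A i₀ i₀ with haa
  set b : Fin n → ℝ := fun j => A i₀ (i₀.succAbove j) with hb
  -- copositivity in block form
  have hcop' : ∀ (t : ℝ) (x : Fin n → ℝ), 0 ≤ t → (∀ i, 0 ≤ x i) →
      0 ≤ a * t ^ 2 + 2 * t * (b ⬝ᵥ x)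
        + x ⬝ᵥ (A.submatrix i₀.succAbove i₀.succAbove).mulVec x := by
    intro t x ht hx
    set v : Fin (n + 1) → ℝ := i₀.insertNth t x with hv
    have hvnn : ∀ i, 0 ≤ v i := by
      refine Fin.succAboveCases i₀ ?_ ?_
      · rw [hv, Fin.insertNth_apply_same]; exact ht
      · intro j; rw [hv, Fin.insertNth_apply_succAbove]; exact hx j
    have h1 := hcop v hvnn
    rw [quad A hA i₀ v] at h1
    have hvi : v i₀ = t := by rw [hv]; simp
    have hvs : v ∘ i₀.succAbove = x := by
      funext j
      rw [hv, Function.comp_apply, Fin.insertNth_apply_succAbove]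
    rw [hvi, hvs] at h1
    exact h1
  obtain ⟨p, hp, hpsd⟩ := key hB a b hcop'
  set ph : Fin (n + 1) → ℝ := i₀.insertNth 0 p with hph
  have hph0 : ph i₀ = 0 := by rw [hph]; simp
  have hphs : ∀ j, ph (i₀.succAbove j) = p j := by
    intro j
    rw [hph, Fin.insertNth_apply_succAbove]
  have hphnn : ∀ i, 0 ≤ ph i := by
    refine Fin.succAboveCases i₀ ?_ ?_
    · rw [hph0]
    · intro j; rw [hphs j]; exact hp j
  set N : Matrix (Fin (n + 1)) (Fin (n + 1)) ℝ :=
    Matrix.of fun i j => (if i = i₀ then ph j else 0) + (if j = i₀ then ph i else 0) with hN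
  have hNapp : ∀ i j, N i j = (if i = i₀ then ph j else 0) + (if j = i₀ then ph i else 0) :=
    fun i j => rfl
  have hNnn : ∀ i j, 0 ≤ N i j := by
    intro i j
    rw [hNapp]
    refine add_nonneg ?_ ?_ <;> split <;> simp [hphnn]
  have hNsymm : ∀ i j, N j i = N i j := by
    intro i j
    rw [hNapp, hNapp]
    ring
  -- quadratic form of N
  have hNquad : ∀ v : Fin (n + 1) → ℝ,
      v ⬝ᵥ N.mulVec v = 2 * v i₀ * (p ⬝ᵥ (v ∘ i₀.succAbove)) := by
    intro v
    have hphd : ph ⬝ᵥ v = p ⬝ᵥ (v ∘ i₀.succAbove) := by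
      rw [show ph ⬝ᵥ v = ∑ i, ph i * v i from rfl,
        Fin.sum_univ_succAbove (fun i => ph i * v i) i₀, hph0]
      simp [dotProduct, hphs, Function.comp]
    have hmv : ∀ i, N.mulVec v i = (if i = i₀ then ph ⬝ᵥ v else 0) + ph i * v i₀ := by
      intro i
      rw [show N.mulVec v i = ∑ j, N i j * v j from rfl]
      simp only [hNapp, add_mul, Finset.sum_add_distrib]
      congr 1
      · split
        · simp [dotProduct]
        · simp
      · rw [Finset.sum_eq_single i₀]
        · simp
        · intro j _ hj; simp [hj]
        · intro h; exact absurd (Finset.mem_univ i₀) h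
    rw [show v ⬝ᵥ N.mulVec v = ∑ i, v i * N.mulVec v i from rfl]
    simp only [hmv, mul_add, Finset.sum_add_distrib]
    rw [Finset.sum_eq_single i₀ (fun j _ hj => by simp [hj]) (fun h => absurd (Finset.mem_univ i₀) h)]
    simp only [if_pos rfl]
    have : ∑ i, v i * (ph i * v i₀) = (ph ⬝ᵥ v) * v i₀ := by
      rw [dotProduct, Finset.sum_mul]
      exact Finset.sum_congr rfl fun i _ => by ring
    rw [this, hphd]
    simp only [if_true]
    ring
  refine ⟨A - N, N, Matrix.PosSemidef.of_dotProduct_mulVec_nonneg ?_ ?_, hNnn, by abel⟩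
  · -- Hermitian
    have : (A - N)ᴴ = A - N := by
      ext i j
      simp only [Matrix.conjTranspose_apply, Matrix.sub_apply, star_trivial]
      rw [hNsymm i j, hA.apply]
    exact this
  · intro v
    have hst : star v = v := by funext i; simp
    rw [hst, Matrix.sub_mulVec, dotProduct_sub, quad A hA i₀ v, hNquad v]
    set t := v i₀
    set x := v ∘ i₀.succAbove with hx
    have := hpsd t x
    rw [sub_dotProduct] at this
    linarith [this]

theorem stmt_7 {n : ℕ} (A : Matrix (Fin (n + 1)) (Fin (n + 1)) ℝ) (hA : A.IsSymm)
    (hcop : Copositive A)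
    (hsub : ∃ i : Fin (n + 1), (A.submatrix i.succAbove i.succAbove).PosSemidef) :
    SPN A := stmt_aux A hA hcop hsub
end

section
/- Let A be a symmetric n×n matrix in ℳ_n (off-diagonal entries nondecreasing in rows and columns) with a_{1j} < 0 for all j ≥ 2 and a_{11} > 0. Then the Schur complement S = A(1) − (1/a_{11}) v v^T, where v = (a_{12},…,a_{1n})^T and A(1) is A with the first row and column deleted, again has off-diagonal entries nondecreasing in rows and columns, i.e., S ∈ ℳ_{n−1}. -/
open Matrix

theorem stmt_9 {n : ℕ} (A : Matrix (Fin (n + 1)) (Fin (n + 1)) ℝ) (hA : A.IsSymm)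
    (hMn : Mn A) (hneg : ∀ j : Fin (n + 1), j ≠ 0 → A 0 j < 0)
    (hpos : 0 < A 0 0) :
    Mn (fun i j : Fin n => A i.succ j.succ - A 0 i.succ * A 0 j.succ / A 0 0) := by
  intro i j k l hik hjl hij hkl
  simp only
  have h1 : A i.succ j.succ ≤ A k.succ l.succ :=
    hMn i.succ j.succ k.succ l.succ (Fin.succ_le_succ_iff.mpr hik)
      (Fin.succ_le_succ_iff.mpr hjl) (fun h => hij (Fin.succ_inj.mp h))
      (fun h => hkl (Fin.succ_inj.mp h))
  have hik' : A 0 i.succ ≤ A 0 k.succ :=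
    hMn 0 i.succ 0 k.succ le_rfl (Fin.succ_le_succ_iff.mpr hik)
      (Fin.succ_ne_zero i).symm (Fin.succ_ne_zero k).symm
  have hjl' : A 0 j.succ ≤ A 0 l.succ :=
    hMn 0 j.succ 0 l.succ le_rfl (Fin.succ_le_succ_iff.mpr hjl)
      (Fin.succ_ne_zero j).symm (Fin.succ_ne_zero l).symm
  have hk : A 0 k.succ < 0 := hneg _ (Fin.succ_ne_zero k)
  have hl : A 0 l.succ < 0 := hneg _ (Fin.succ_ne_zero l)
  have hprod : A 0 k.succ * A 0 l.succ ≤ A 0 i.succ * A 0 j.succ := by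
    calc A 0 k.succ * A 0 l.succ ≤ A 0 k.succ * A 0 j.succ := by nlinarith
      _ ≤ A 0 i.succ * A 0 j.succ := by nlinarith
  have hdiv : A 0 k.succ * A 0 l.succ / A 0 0 ≤ A 0 i.succ * A 0 j.succ / A 0 0 := by
    gcongr
  linarith
end

section
/- Let A be a symmetric n×n matrix whose off-diagonal entries are nondecreasing in rows and columns (a_{ij} ≤ a_{kℓ} whenever i ≤ k, j ≤ ℓ, i ≠ j, k ≠ ℓ). Then A is copositive if and only if A is the sum of a positive semidefinite matrix and an entrywise nonnegative matrix. -/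
open Matrix

private lemma quadForm_eq {ι : Type*} [Fintype ι] (M : Matrix ι ι ℝ) (x : ι → ℝ) :
    x ⬝ᵥ M.mulVec x = ∑ i, ∑ j, x i * M i j * x j := by
  simp only [dotProduct, mulVec, Finset.mul_sum]
  exact Finset.sum_congr rfl fun i _ => Finset.sum_congr rfl fun j _ => by ring

private lemma sum_split {m : ℕ} (f : Fin (m+1) → Fin (m+1) → ℝ) :
    ∑ i, ∑ j, f i j = (f 0 0 + ∑ j : Fin m, f 0 j.succ)
      + ∑ i : Fin m, (f i.succ 0 + ∑ j : Fin m, f i.succ j.succ) := by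
  rw [Fin.sum_univ_succ (f := fun i => ∑ j, f i j), Fin.sum_univ_succ (f := fun j => f 0 j)]
  congr 1
  exact Finset.sum_congr rfl fun i _ => Fin.sum_univ_succ _

private lemma quad_single {n : ℕ} (M : Matrix (Fin n) (Fin n) ℝ) (a : Fin n) :
    Pi.single a (1:ℝ) ⬝ᵥ M.mulVec (Pi.single a 1) = M a a := by
  rw [mulVec_single, single_dotProduct]; simp

private lemma quad_pair {n : ℕ} (M : Matrix (Fin n) (Fin n) ℝ) (a b : Fin n) (s c : ℝ)
    (x : Fin n → ℝ) (hx : x = s • (Pi.single a 1 : Fin n → ℝ) + c • (Pi.single b 1 : Fin n → ℝ)) :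
    x ⬝ᵥ M.mulVec x = s*(M a a)*s + s*(M a b)*c + c*(M b a)*s + c*(M b b)*c := by
  subst hx
  simp [mulVec_add, mulVec_smul, mulVec_single, dotProduct_add, add_dotProduct,
    smul_dotProduct, dotProduct_smul, single_dotProduct, smul_eq_mul]
  ring

private lemma spn_copositive {ι : Type*} [Fintype ι] {A : Matrix ι ι ℝ} (h : SPN A) :
    Copositive A := by
  obtain ⟨P, N, hP, hN, rfl⟩ := h
  intro x hx
  rw [add_mulVec, dotProduct_add]
  have h1 : 0 ≤ x ⬝ᵥ P.mulVec x := by simpa using hP.dotProduct_mulVec_nonneg x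
  have h2 : 0 ≤ x ⬝ᵥ N.mulVec x := by
    rw [quadForm_eq]
    exact Finset.sum_nonneg fun i _ => Finset.sum_nonneg fun j _ =>
      mul_nonneg (mul_nonneg (hx i) (hN i j)) (hx j)
  linarith

/-- the auxiliary vector -/
private def uvec {m : ℕ} (A : Matrix (Fin (m+1)) (Fin (m+1)) ℝ) : Fin (m+1) → ℝ :=
  fun i => if i = 0 then A 0 0 else min (A 0 i) 0

private lemma uvec_zero {m : ℕ} (A : Matrix (Fin (m+1)) (Fin (m+1)) ℝ) :
    uvec A 0 = A 0 0 := if_pos rfl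

private lemma uvec_succ {m : ℕ} (A : Matrix (Fin (m+1)) (Fin (m+1)) ℝ) (i : Fin m) :
    uvec A i.succ = min (A 0 i.succ) 0 := if_neg (Fin.succ_ne_zero i)

/-- the Schur-type complement -/
private noncomputable def Cmat {m : ℕ} (A : Matrix (Fin (m+1)) (Fin (m+1)) ℝ) : Matrix (Fin m) (Fin m) ℝ :=
  Matrix.of fun i j => A i.succ j.succ - (A 0 0)⁻¹ * (uvec A i.succ * uvec A j.succ)

private lemma Cmat_apply {m : ℕ} (A : Matrix (Fin (m+1)) (Fin (m+1)) ℝ) (i j : Fin m) :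
    Cmat A i j = A i.succ j.succ - (A 0 0)⁻¹ * (uvec A i.succ * uvec A j.succ) := rfl

/-- embedding of a small matrix with a zero 0-th row and column -/
private def liftMat0 {m : ℕ} (M : Matrix (Fin m) (Fin m) ℝ) :
    Matrix (Fin (m+1)) (Fin (m+1)) ℝ :=
  Matrix.of (Fin.cons (fun _ => (0:ℝ)) (fun i => Fin.cons (0:ℝ) (fun j => M i j)))

private lemma liftMat0_zero {m : ℕ} (M : Matrix (Fin m) (Fin m) ℝ) (j : Fin (m+1)) :
    liftMat0 M 0 j = 0 := by simp [liftMat0]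

private lemma liftMat0_succ_zero {m : ℕ} (M : Matrix (Fin m) (Fin m) ℝ) (i : Fin m) :
    liftMat0 M i.succ 0 = 0 := by simp [liftMat0]

private lemma liftMat0_succ_succ {m : ℕ} (M : Matrix (Fin m) (Fin m) ℝ) (i j : Fin m) :
    liftMat0 M i.succ j.succ = M i j := by simp [liftMat0]

private lemma fin_one_le {m : ℕ} (hm : 1 ≤ m) (j : Fin (m+1)) (h : j ≠ 0) : (1 : Fin (m+1)) ≤ j := by
  rw [Fin.le_def, Fin.val_one', Nat.mod_eq_of_lt (by omega)]
  have h1 : j.val ≠ 0 := fun h' => h (Fin.ext h')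
  omega

private lemma fin_zero_ne_one {m : ℕ} (hm : 1 ≤ m) : (0 : Fin (m+1)) ≠ 1 := by
  intro h
  have h2 : (0:ℕ) = 1 % (m+1) := by
    have := congrArg Fin.val h
    rwa [Fin.val_zero, Fin.val_one'] at this
  rw [Nat.mod_eq_of_lt (by omega)] at h2
  omega

private lemma quad_lift {m : ℕ} (M : Matrix (Fin m) (Fin m) ℝ) (x : Fin (m+1) → ℝ) :
    x ⬝ᵥ (liftMat0 M).mulVec x = (fun i => x i.succ) ⬝ᵥ M.mulVec (fun i => x i.succ) := by
  rw [quadForm_eq, quadForm_eq, sum_split (f := fun i j => x i * liftMat0 M i j * x j)]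
  simp [liftMat0_zero, liftMat0_succ_zero, liftMat0_succ_succ]

private lemma lift_herm {m : ℕ} {M : Matrix (Fin m) (Fin m) ℝ} (h : M.IsHermitian) :
    (liftMat0 M).IsHermitian := by
  have happ : ∀ i j, M j i = M i j := by
    intro i j
    have := congrFun (congrFun h i) j
    simpa using this
  ext i j
  rw [Matrix.conjTranspose_apply, star_trivial]
  induction i using Fin.cases with
  | zero =>
      induction j using Fin.cases with
      | zero => rfl
      | succ j => rw [liftMat0_zero, liftMat0_succ_zero]
  | succ i =>
      induction j using Fin.cases with
      | zero => rw [liftMat0_zero, liftMat0_succ_zero]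
      | succ j => rw [liftMat0_succ_succ, liftMat0_succ_succ, happ]

private lemma cop_to_spn : ∀ (n : ℕ) (A : Matrix (Fin n) (Fin n) ℝ),
    A.IsSymm → Mn A → Copositive A → SPN A := by
  intro n
  induction n with
  | zero =>
      intro A _ _ _
      exact ⟨0, 0, Matrix.PosSemidef.zero, fun i => i.elim0, by ext i; exact i.elim0⟩
  | succ m ih =>
      intro A hA hMn hcop
      have hdiag : ∀ i, 0 ≤ A i i := by
        intro i
        have h := hcop (Pi.single i 1) (fun j => by
          rw [Pi.single_apply]; split <;> norm_num)
        rwa [quad_single] at h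
      by_cases h01 : 0 ≤ A 0 1
      · -- all entries nonnegative
        refine ⟨0, A, Matrix.PosSemidef.zero, ?_, by simp⟩
        intro i j
        rcases eq_or_ne i j with rfl | hij
        · exact hdiag i
        · have hm2 : 1 ≤ m := by
            have hi := i.isLt; have hj := j.isLt
            have : i.val ≠ j.val := fun h => hij (Fin.ext h)
            omega
          have hne01 : (0 : Fin (m+1)) ≠ 1 := fin_zero_ne_one hm2
          rcases lt_or_gt_of_ne hij with h | h
          · have h1j : (1 : Fin (m+1)) ≤ j :=
              fin_one_le hm2 j (Fin.pos_iff_ne_zero.mp ((Fin.zero_le i).trans_lt h))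
            exact le_trans h01 (hMn 0 1 i j (Fin.zero_le i) h1j hne01 hij)
          · have h1i : (1 : Fin (m+1)) ≤ i :=
              fin_one_le hm2 i (Fin.pos_iff_ne_zero.mp ((Fin.zero_le j).trans_lt h))
            have := hMn 0 1 j i (Fin.zero_le j) h1i hne01 hij.symm
            rw [hA.apply i j] at this  -- A j i = A i j
            exact le_trans h01 this
      · push_neg at h01
        have hne01 : (0 : Fin (m+1)) ≠ 1 := by
          intro h
          rw [← h] at h01
          exact absurd (hdiag 0) (not_le.2 h01)
        -- A 0 0 > 0
        have ha00 : 0 < A 0 0 := by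
          rcases lt_or_eq_of_le (hdiag 0) with h | h
          · exact h
          · exfalso
            set t : ℝ := (A 1 1 + 1) / (-(2 * A 0 1)) with htdef
            have ht : 0 ≤ t := le_of_lt (div_pos (by linarith [hdiag 1]) (by linarith))
            set x : Fin (m+1) → ℝ := t • (Pi.single 0 1 : Fin (m+1) → ℝ)
              + (1:ℝ) • (Pi.single 1 1 : Fin (m+1) → ℝ) with hxdef
            have hx : ∀ k, 0 ≤ x k := by
              intro k
              rw [hxdef]
              simp only [Pi.add_apply, Pi.smul_apply, smul_eq_mul, Pi.single_apply]
              split <;> split <;> norm_num <;> linarith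
            have hq := hcop x hx
            rw [quad_pair A 0 1 t 1 x hxdef] at hq
            have hsym : A 1 0 = A 0 1 := hA.apply 0 1
            have hmul : 2 * A 0 1 * t = -(A 1 1 + 1) := by
              have hne' : -(2 * A 0 1) ≠ 0 := ne_of_gt (by linarith)
              rw [htdef, ← mul_div_assoc, div_eq_iff hne']
              ring
            rw [hsym, ← h] at hq
            nlinarith
        have ha00' : (A 0 0 : ℝ) ≠ 0 := ne_of_gt ha00
        -- basic facts about uvec
        have hu_nonpos : ∀ i : Fin m, uvec A i.succ ≤ 0 := fun i => by
          rw [uvec_succ]; exact min_le_right _ _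
        have hu_neg : ∀ i : Fin m, A 0 i.succ < 0 → uvec A i.succ = A 0 i.succ := fun i h => by
          rw [uvec_succ]; exact min_eq_left h.le
        have hu_zero : ∀ i : Fin m, ¬ A 0 i.succ < 0 → uvec A i.succ = 0 := fun i h => by
          rw [uvec_succ]; exact min_eq_right (not_lt.mp h)
        have hu_mono : ∀ i k : Fin m, i ≤ k → uvec A i.succ ≤ uvec A k.succ := by
          intro i k hik
          rw [uvec_succ, uvec_succ]
          exact min_le_min (hMn 0 i.succ 0 k.succ (le_refl 0)
            (by rwa [Fin.succ_le_succ_iff]) (Fin.succ_ne_zero i).symm (Fin.succ_ne_zero k).symm)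
            (le_refl 0)
        -- expansion of the rank-one quadratic form
        have expand : ∀ v : Fin (m+1) → ℝ,
            ∑ i, ∑ j, v i * ((A 0 0)⁻¹ * (uvec A i * uvec A j)) * v j
              = (A 0 0)⁻¹ * (∑ i, uvec A i * v i)^2 := by
          intro v
          have hsq : (∑ i, uvec A i * v i)^2 = ∑ i, ∑ j, (uvec A i * v i) * (uvec A j * v j) := by
            rw [sq, Finset.sum_mul_sum]
          rw [hsq, Finset.mul_sum]
          exact Finset.sum_congr rfl fun i _ => by
            rw [Finset.mul_sum]
            exact Finset.sum_congr rfl fun j _ => by ring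
        -- nonnegativity of A entries against uvec-zero positions
        have hAnn : ∀ i j : Fin m, ¬ A 0 i.succ < 0 ∨ ¬ A 0 j.succ < 0 → 0 ≤ A i.succ j.succ := by
          intro i j hcase
          rcases eq_or_ne i j with rfl | hij
          · exact hdiag _
          · have hsucc : i.succ ≠ j.succ := fun h => hij (Fin.succ_injective _ h)
            rcases hcase with h | h
            · have := hMn 0 i.succ j.succ i.succ (Fin.zero_le _) (le_refl _)
                (Fin.succ_ne_zero i).symm hsucc.symm
              rw [← hA.apply j.succ i.succ] at this
              linarith [not_lt.mp h]
            · have := hMn 0 j.succ i.succ j.succ (Fin.zero_le _) (le_refl _)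
                (Fin.succ_ne_zero j).symm hsucc
              linarith [not_lt.mp h]
        -- Cmat entries are nonneg when one of the u's vanishes
        have hCnn : ∀ i j : Fin m, ¬ A 0 i.succ < 0 ∨ ¬ A 0 j.succ < 0 → 0 ≤ Cmat A i j := by
          intro i j hcase
          rw [Cmat_apply]
          rcases hcase with h | h
          · rw [hu_zero i h]
            simpa using hAnn i j (Or.inl h)
          · rw [hu_zero j h]
            simpa using hAnn i j (Or.inr h)
        -- symmetry of Cmat
        have hCsymm : (Cmat A).IsSymm := by
          ext i j
          show Cmat A j i = Cmat A i j
          rw [Cmat_apply, Cmat_apply, hA.apply i.succ j.succ]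
          ring
        -- Mn for Cmat
        have hCMn : Mn (Cmat A) := by
          intro i j k l hik hjl hij hkl
          rw [Cmat_apply, Cmat_apply]
          have h1 : A i.succ j.succ ≤ A k.succ l.succ :=
            hMn _ _ _ _ (by rwa [Fin.succ_le_succ_iff]) (by rwa [Fin.succ_le_succ_iff])
              (fun h => hij (Fin.succ_injective _ h)) (fun h => hkl (Fin.succ_injective _ h))
          have h2 : uvec A k.succ * uvec A l.succ ≤ uvec A i.succ * uvec A j.succ := by
            have e1 : uvec A k.succ * uvec A l.succ ≤ uvec A i.succ * uvec A l.succ :=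
              mul_le_mul_of_nonpos_right (hu_mono i k hik) (hu_nonpos l)
            have e2 : uvec A i.succ * uvec A l.succ ≤ uvec A i.succ * uvec A j.succ :=
              mul_le_mul_of_nonpos_left (hu_mono j l hjl) (hu_nonpos i)
            linarith
          have h3 : (A 0 0)⁻¹ * (uvec A k.succ * uvec A l.succ)
              ≤ (A 0 0)⁻¹ * (uvec A i.succ * uvec A j.succ) :=
            mul_le_mul_of_nonneg_left h2 (inv_pos.2 ha00).le
          linarith
        -- copositivity of Cmat
        have hCcop : Copositive (Cmat A) := by
          intro y hy
          set s : ℝ := ∑ i : Fin m, uvec A i.succ * y i with hsdef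
          have hs : s ≤ 0 := Finset.sum_nonpos fun i _ =>
            mul_nonpos_iff.2 (Or.inr ⟨hu_nonpos i, hy i⟩)
          set t : ℝ := -s / A 0 0 with htdef
          have ht : 0 ≤ t := div_nonneg (by linarith) ha00.le
          set z : Fin (m+1) → ℝ :=
            Fin.cons t (fun i => if A 0 i.succ < 0 then y i else 0) with hzdef
          have hz0 : z 0 = t := by rw [hzdef]; exact Fin.cons_zero _ _
          have hzs : ∀ i : Fin m, z i.succ = if A 0 i.succ < 0 then y i else 0 := by
            intro i; rw [hzdef]; exact Fin.cons_succ _ _ _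
          have hznn : ∀ i, 0 ≤ z i := by
            intro i
            induction i using Fin.cases with
            | zero => rw [hz0]; exact ht
            | succ i => rw [hzs]; split; exacts [hy i, le_refl 0]
          have hzy : ∀ i : Fin m, z i.succ ≤ y i := by
            intro i; rw [hzs]; split; exacts [le_refl _, hy i]
          -- sum uvec * z = 0
          have husz : ∑ i, uvec A i * z i = 0 := by
            rw [Fin.sum_univ_succ]
            have hterm : ∀ i : Fin m, uvec A i.succ * z i.succ = uvec A i.succ * y i := by
              intro i
              rw [hzs]
              by_cases h : A 0 i.succ < 0
              · rw [if_pos h]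
              · rw [if_neg h, hu_zero i h]; ring
            rw [Finset.sum_congr rfl fun i _ => hterm i, uvec_zero, hz0, htdef, ← hsdef]
            field_simp
            ring
          -- quadratic form of A at z splits
          have hAz := hcop z hznn
          rw [quadForm_eq] at hAz
          have hsplitA : ∑ i, ∑ j, z i * A i j * z j
              = (∑ i, ∑ j, z i * (A i j - (A 0 0)⁻¹ * (uvec A i * uvec A j)) * z j)
                + (A 0 0)⁻¹ * (∑ i, uvec A i * z i)^2 := by
            rw [← expand z, ← Finset.sum_add_distrib]
            refine Finset.sum_congr rfl fun i _ => ?_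
            rw [← Finset.sum_add_distrib]
            exact Finset.sum_congr rfl fun j _ => by ring
          rw [hsplitA, husz] at hAz
          simp only [ne_eq, OfNat.ofNat_ne_zero, not_false_eq_true, zero_pow, mul_zero,
            add_zero] at hAz
          -- reduce the B-sum to the block sum
          have hblock : ∑ i, ∑ j, z i * (A i j - (A 0 0)⁻¹ * (uvec A i * uvec A j)) * z j
              = ∑ i : Fin m, ∑ j : Fin m, z i.succ * Cmat A i j * z j.succ := by
            rw [sum_split]
            have hB00 : A 0 0 - (A 0 0)⁻¹ * (uvec A 0 * uvec A 0) = 0 := by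
              rw [uvec_zero]; field_simp; ring
            have hrow : ∀ j : Fin m,
                z 0 * (A 0 j.succ - (A 0 0)⁻¹ * (uvec A 0 * uvec A j.succ)) * z j.succ = 0 := by
              intro j
              by_cases h : A 0 j.succ < 0
              · rw [uvec_zero, hu_neg j h]
                have : A 0 j.succ - (A 0 0)⁻¹ * (A 0 0 * A 0 j.succ) = 0 := by field_simp; ring
                rw [this]; ring
              · rw [hzs, if_neg h]; ring
            have hcol : ∀ i : Fin m,
                z i.succ * (A i.succ 0 - (A 0 0)⁻¹ * (uvec A i.succ * uvec A 0)) * z 0 = 0 := by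
              intro i
              by_cases h : A 0 i.succ < 0
              · rw [uvec_zero, hu_neg i h, ← hA.apply i.succ 0]
                have : A 0 i.succ - (A 0 0)⁻¹ * (A 0 i.succ * A 0 0) = 0 := by field_simp; ring
                rw [this]; ring
              · rw [hzs, if_neg h]; ring
            rw [hB00, mul_zero, zero_mul, zero_add]
            rw [Finset.sum_congr rfl fun j _ => hrow j, Finset.sum_const_zero, zero_add]
            refine Finset.sum_congr rfl fun i _ => ?_
            rw [hcol i, zero_add]
            exact Finset.sum_congr rfl fun j _ => by rw [← Cmat_apply]
          rw [hblock] at hAz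
          -- compare with the quadratic form at y
          rw [quadForm_eq]
          refine le_trans hAz (Finset.sum_le_sum fun i _ => Finset.sum_le_sum fun j _ => ?_)
          by_cases hi : A 0 i.succ < 0
          · by_cases hj : A 0 j.succ < 0
            · rw [hzs i, hzs j, if_pos hi, if_pos hj]
            · have hC := hCnn i j (Or.inr hj)
              have e1 : z i.succ * Cmat A i j * z j.succ ≤ y i * Cmat A i j * z j.succ :=
                mul_le_mul_of_nonneg_right (mul_le_mul_of_nonneg_right (hzy i) hC) (hznn j.succ)
              have e2 : y i * Cmat A i j * z j.succ ≤ y i * Cmat A i j * y j :=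
                mul_le_mul_of_nonneg_left (hzy j) (mul_nonneg (hy i) hC)
              linarith
          · have hC := hCnn i j (Or.inl hi)
            have e1 : z i.succ * Cmat A i j * z j.succ ≤ y i * Cmat A i j * z j.succ :=
              mul_le_mul_of_nonneg_right (mul_le_mul_of_nonneg_right (hzy i) hC) (hznn j.succ)
            have e2 : y i * Cmat A i j * z j.succ ≤ y i * Cmat A i j * y j :=
              mul_le_mul_of_nonneg_left (hzy j) (mul_nonneg (hy i) hC)
            linarith
        -- apply the induction hypothesis
        obtain ⟨P', N', hP', hN', hCeq⟩ := ih (Cmat A) hCsymm hCMn hCcop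
        -- assemble the decomposition
        set P : Matrix (Fin (m+1)) (Fin (m+1)) ℝ :=
          (Matrix.of fun i j => (A 0 0)⁻¹ * (uvec A i * uvec A j)) + liftMat0 P' with hPdef
        set N : Matrix (Fin (m+1)) (Fin (m+1)) ℝ :=
          Matrix.of (fun i j => A i j - ((A 0 0)⁻¹ * (uvec A i * uvec A j) + liftMat0 P' i j))
          with hNdef
        have hCentry : ∀ i j : Fin m, Cmat A i j = P' i j + N' i j := by
          intro i j
          rw [hCeq]; rfl
        have hrank1 : (Matrix.of fun i j => (A 0 0)⁻¹ * (uvec A i * uvec A j)).PosSemidef := by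
          apply Matrix.PosSemidef.of_dotProduct_mulVec_nonneg
          · ext i j
            rw [Matrix.conjTranspose_apply, star_trivial, Matrix.of_apply, Matrix.of_apply]
            ring
          · intro x
            have hq : x ⬝ᵥ (Matrix.of fun i j => (A 0 0)⁻¹ * (uvec A i * uvec A j)).mulVec x
                = (A 0 0)⁻¹ * (∑ i, uvec A i * x i)^2 := by
              rw [quadForm_eq]
              exact expand x
            have : (0:ℝ) ≤ (A 0 0)⁻¹ * (∑ i, uvec A i * x i)^2 :=
              mul_nonneg (inv_pos.2 ha00).le (sq_nonneg _)
            simpa [hq] using this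
        have hliftP : (liftMat0 P').PosSemidef := by
          refine Matrix.PosSemidef.of_dotProduct_mulVec_nonneg (lift_herm hP'.1) fun x => ?_
          have hq := quad_lift P' x
          have h2 : (0:ℝ) ≤ (fun i => x i.succ) ⬝ᵥ P'.mulVec (fun i => x i.succ) := by
            simpa using hP'.dotProduct_mulVec_nonneg (fun i => x i.succ)
          simpa [hq] using h2
        refine ⟨P, N, hrank1.add hliftP, ?_, ?_⟩
        · intro i j
          rw [hNdef, Matrix.of_apply]
          induction i using Fin.cases with
          | zero =>
              induction j using Fin.cases with
              | zero =>
                  rw [liftMat0_zero, uvec_zero]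
                  have : (A 0 0)⁻¹ * (A 0 0 * A 0 0) = A 0 0 := by field_simp
                  rw [this]; ring_nf; rfl
              | succ j =>
                  rw [liftMat0_zero, uvec_zero]
                  have h1 : (A 0 0)⁻¹ * (A 0 0 * uvec A j.succ) = uvec A j.succ := by
                    field_simp
                  rw [h1, add_zero, uvec_succ]
                  have := min_le_left (A 0 j.succ) (0:ℝ)
                  linarith
          | succ i =>
              induction j using Fin.cases with
              | zero =>
                  rw [liftMat0_succ_zero, uvec_zero]
                  have h1 : (A 0 0)⁻¹ * (uvec A i.succ * A 0 0) = uvec A i.succ := by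
                    field_simp
                  rw [h1, add_zero, ← hA.apply i.succ 0, uvec_succ]
                  have := min_le_left (A 0 i.succ) (0:ℝ)
                  linarith
              | succ j =>
                  rw [liftMat0_succ_succ]
                  have h1 : A i.succ j.succ - ((A 0 0)⁻¹ * (uvec A i.succ * uvec A j.succ) + P' i j)
                      = N' i j := by
                    have := hCentry i j
                    rw [Cmat_apply] at this
                    linarith
                  rw [h1]
                  exact hN' i j
        · ext i j
          rw [hPdef, hNdef, Matrix.add_apply, Matrix.add_apply, Matrix.of_apply, Matrix.of_apply]
          ring

theorem stmt_10 {n : ℕ} (A : Matrix (Fin n) (Fin n) ℝ) (hA : A.IsSymm) (hMn : Mn A) :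
    Copositive A ↔ SPN A :=
  ⟨fun h => cop_to_spn n A hA hMn h, fun h => spn_copositive h⟩
end

section
/- Let M be a symmetric n×n matrix satisfying: (I) whenever m_{ij} > 0 one has m_{ij} ≤ m_{i+1,j} and m_{ij} ≤ m_{i,j+1} (whenever defined); and (II) with k = idx(M) the first row containing a positive off-diagonal entry, m_{ij} ≤ m_{i,j+1} for all i ∈ [n−1] and all max{k, i+1} ≤ j ≤ n−1. If M is copositive then M is SPN. -/
open Matrix

open Classical in
/-- The positive index of a symmetric matrix (1-based): the first row containing a
positive off-diagonal entry, or `n + 1` if all off-diagonal entries are nonpositive. -/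
noncomputable def posIdx {n : ℕ} (M : Matrix (Fin n) (Fin n) ℝ) : ℕ :=
  if ∃ i j : Fin n, i ≠ j ∧ 0 < M i j then
    sInf {m : ℕ | ∃ i j : Fin n, (i : ℕ) + 1 = m ∧ i ≠ j ∧ 0 < M i j}
  else n + 1

namespace SPN_aux

lemma quadForm_expand {m : ℕ} (A : Matrix (Fin m) (Fin m) ℝ) (x : Fin m → ℝ) :
    x ⬝ᵥ A.mulVec x = ∑ i, ∑ j, x i * A i j * x j := by
  simp only [dotProduct, mulVec, Finset.mul_sum]
  exact Finset.sum_congr rfl fun i _ => Finset.sum_congr rfl fun j _ => by ring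

lemma posSemidef_of {m : ℕ} (A : Matrix (Fin m) (Fin m) ℝ) (hs : A.IsSymm)
    (h : ∀ x : Fin m → ℝ, 0 ≤ x ⬝ᵥ A.mulVec x) : A.PosSemidef := by
  refine PosSemidef.of_dotProduct_mulVec_nonneg ?_ ?_
  · rw [Matrix.IsHermitian, conjTranspose_eq_transpose_of_trivial]; exact hs
  · intro x
    have hst : star x = x := funext fun i => star_trivial _
    rw [hst]; exact h x

lemma quad_nonneg_of_psd {m : ℕ} {A : Matrix (Fin m) (Fin m) ℝ} (h : A.PosSemidef)
    (x : Fin m → ℝ) : 0 ≤ x ⬝ᵥ A.mulVec x := by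
  have := h.dotProduct_mulVec_nonneg x
  rwa [show star x = x from funext fun i => star_trivial _] at this

lemma isSymm_of_psd {m : ℕ} {A : Matrix (Fin m) (Fin m) ℝ} (h : A.PosSemidef) : A.IsSymm := by
  rw [Matrix.IsSymm, ← conjTranspose_eq_transpose_of_trivial]; exact h.1

lemma diag_nonneg {m : ℕ} {A : Matrix (Fin m) (Fin m) ℝ} (hc : Copositive A) (i : Fin m) :
    0 ≤ A i i := by
  have h := hc (Pi.single i 1) (fun j => by
    rw [Pi.single_apply]; split <;> norm_num)
  rw [mulVec_single, MulOpposite.op_one, one_smul,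
    single_dotProduct, one_mul] at h
  exact h

lemma psd_of_offdiag_nonpos {m : ℕ} {A : Matrix (Fin m) (Fin m) ℝ} (hs : A.IsSymm)
    (hc : Copositive A) (hoff : ∀ i j : Fin m, i ≠ j → A i j ≤ 0) : A.PosSemidef := by
  apply posSemidef_of A hs
  intro x
  have key : (fun i => |x i|) ⬝ᵥ A.mulVec (fun i => |x i|) ≤ x ⬝ᵥ A.mulVec x := by
    rw [quadForm_expand, quadForm_expand]
    refine Finset.sum_le_sum fun i _ => Finset.sum_le_sum fun j _ => ?_
    by_cases hij : i = j
    · subst hij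
      have h1 : |x i| * |x i| = x i * x i := abs_mul_abs_self _
      have : |x i| * A i i * |x i| = x i * A i i * x i := by
        calc |x i| * A i i * |x i| = A i i * (|x i| * |x i|) := by ring
        _ = A i i * (x i * x i) := by rw [h1]
        _ = x i * A i i * x i := by ring
      exact le_of_eq this
    · have h1 : A i j ≤ 0 := hoff i j hij
      have h2 : x i * x j ≤ |x i| * |x j| := by
        rw [← abs_mul]; exact le_abs_self _
      nlinarith [mul_le_mul_of_nonpos_right h2 h1]
  exact le_trans (hc _ (fun i => abs_nonneg _)) key

def emb0 {m : ℕ} (A : Matrix (Fin m) (Fin m) ℝ) : Matrix (Fin (m+1)) (Fin (m+1)) ℝ :=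
  Matrix.of fun i j => Fin.cases 0 (fun i' => Fin.cases 0 (fun j' => A i' j') j) i

@[simp] lemma emb0_zero {m : ℕ} (A : Matrix (Fin m) (Fin m) ℝ) (j : Fin (m+1)) :
    emb0 A 0 j = 0 := rfl
@[simp] lemma emb0_succ_zero {m : ℕ} (A : Matrix (Fin m) (Fin m) ℝ) (i : Fin m) :
    emb0 A i.succ 0 = 0 := by simp [emb0]
@[simp] lemma emb0_succ_succ {m : ℕ} (A : Matrix (Fin m) (Fin m) ℝ) (i j : Fin m) :
    emb0 A i.succ j.succ = A i j := by simp [emb0]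

lemma emb0_quad {m : ℕ} (A : Matrix (Fin m) (Fin m) ℝ) (x : Fin (m+1) → ℝ) :
    x ⬝ᵥ (emb0 A).mulVec x = (fun i => x i.succ) ⬝ᵥ A.mulVec (fun i => x i.succ) := by
  rw [quadForm_expand, quadForm_expand, Fin.sum_univ_succ]
  simp [Fin.sum_univ_succ]

lemma emb0_psd {m : ℕ} {A : Matrix (Fin m) (Fin m) ℝ} (h : A.PosSemidef) :
    (emb0 A).PosSemidef := by
  have hs := (isSymm_of_psd h)
  apply posSemidef_of
  · rw [Matrix.IsSymm.ext_iff]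
    intro i j
    induction i using Fin.cases <;> induction j using Fin.cases <;> simp [emb0, hs.apply _ _]
  · intro x
    rw [emb0_quad]
    exact quad_nonneg_of_psd h _

def embL {m : ℕ} (A : Matrix (Fin m) (Fin m) ℝ) : Matrix (Fin (m+1)) (Fin (m+1)) ℝ :=
  Matrix.of fun i j => Fin.lastCases 0 (fun i' => Fin.lastCases 0 (fun j' => A i' j') j) i

@[simp] lemma embL_last {m : ℕ} (A : Matrix (Fin m) (Fin m) ℝ) (j : Fin (m+1)) :
    embL A (Fin.last m) j = 0 := by simp [embL]
@[simp] lemma embL_cast_last {m : ℕ} (A : Matrix (Fin m) (Fin m) ℝ) (i : Fin m) :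
    embL A i.castSucc (Fin.last m) = 0 := by simp [embL]
@[simp] lemma embL_cast_cast {m : ℕ} (A : Matrix (Fin m) (Fin m) ℝ) (i j : Fin m) :
    embL A i.castSucc j.castSucc = A i j := by simp [embL]

lemma embL_quad {m : ℕ} (A : Matrix (Fin m) (Fin m) ℝ) (x : Fin (m+1) → ℝ) :
    x ⬝ᵥ (embL A).mulVec x = (fun i => x i.castSucc) ⬝ᵥ A.mulVec (fun i => x i.castSucc) := by
  rw [quadForm_expand, quadForm_expand, Fin.sum_univ_castSucc]
  simp [Fin.sum_univ_castSucc]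

lemma embL_psd {m : ℕ} {A : Matrix (Fin m) (Fin m) ℝ} (h : A.PosSemidef) :
    (embL A).PosSemidef := by
  have hs := (isSymm_of_psd h)
  apply posSemidef_of
  · rw [Matrix.IsSymm.ext_iff]
    intro i j
    induction i using Fin.lastCases <;> induction j using Fin.lastCases <;>
      simp [embL, hs.apply _ _]
  · intro x
    rw [embL_quad]
    exact quad_nonneg_of_psd h _

/-- quadratic form at a combination of two basis vectors -/
lemma quad_pair {m : ℕ} (A : Matrix (Fin m) (Fin m) ℝ) (i j : Fin m) (s t : ℝ) :
    (Pi.single i s + Pi.single j t) ⬝ᵥ A.mulVec (Pi.single i s + Pi.single j t)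
      = s * A i i * s + s * A i j * t + t * A j i * s + t * A j j * t := by
  simp [mulVec_add, mulVec_single, add_dotProduct, dotProduct_add, single_dotProduct,
    Pi.add_apply]
  ring


theorem key (n : ℕ) : ∀ (M : Matrix (Fin n) (Fin n) ℝ), M.IsSymm →
    (∀ i j : Fin n, i ≠ j → 0 < M i j →
      (∀ h : (i : ℕ) + 1 < n, M i j ≤ M ⟨(i : ℕ) + 1, h⟩ j) ∧
      (∀ h : (j : ℕ) + 1 < n, M i j ≤ M i ⟨(j : ℕ) + 1, h⟩)) →
    (∀ (i j : Fin n) (h : (j : ℕ) + 1 < n), (i : ℕ) + 1 < n →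
      posIdx M ≤ (j : ℕ) + 1 → (i : ℕ) < (j : ℕ) →
      M i j ≤ M i ⟨(j : ℕ) + 1, h⟩) →
    Copositive M → SPN M := by
  induction n with
  | zero =>
    intro M _ _ _ _
    refine ⟨0, M, ?_, fun i _ => i.elim0, (zero_add M).symm⟩
    apply posSemidef_of
    · rw [Matrix.IsSymm.ext_iff]; intro i _; exact i.elim0
    · intro x
      rw [quadForm_expand]
      simp
  | succ n IH =>
    intro M hM hI hII hcop
    have hdiag : ∀ i, 0 ≤ M i i := fun i => diag_nonneg hcop i
    by_cases hpos : ∃ i j : Fin (n+1), i ≠ j ∧ 0 < M i j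
    · -- there is a positive off-diagonal entry
      have hRSne : {m : ℕ | ∃ i j : Fin (n+1), (i:ℕ) = m ∧ i ≠ j ∧ 0 < M i j}.Nonempty := by
        obtain ⟨i, j, hij, h⟩ := hpos
        exact ⟨(i:ℕ), i, j, rfl, hij, h⟩
      set a := sInf {m : ℕ | ∃ i j : Fin (n+1), (i:ℕ) = m ∧ i ≠ j ∧ 0 < M i j} with hadef
      have haMem : ∃ i j : Fin (n+1), (i:ℕ) = a ∧ i ≠ j ∧ 0 < M i j := Nat.sInf_mem hRSne
      have hrow : ∀ i j : Fin (n+1), i ≠ j → 0 < M i j → a ≤ (i:ℕ) :=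
        fun i j hij h => Nat.sInf_le ⟨i, j, rfl, hij, h⟩
      obtain ⟨i0, j0, hi0val, hij0, hpos0⟩ := haMem
      have hposIdx_le : posIdx M ≤ a + 1 := by
        simp only [posIdx, if_pos hpos]
        exact Nat.sInf_le ⟨i0, j0, by rw [hi0val], hij0, hpos0⟩
      have hII' : ∀ (i j : Fin (n+1)) (h : (j:ℕ)+1 < n+1), (i:ℕ)+1 < n+1 → a ≤ (j:ℕ) →
          (i:ℕ) < (j:ℕ) → M i j ≤ M i ⟨(j:ℕ)+1, h⟩ :=
        fun i j h h1 h2 h3 => hII i j h h1 (le_trans hposIdx_le (by omega)) h3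
      by_cases ha0 : a = 0
      · -- Case B1 : peel off the last row and column
        -- chains of positive entries
        have chainJ : ∀ (i j : Fin (n+1)), (i:ℕ) < (j:ℕ) → 0 < M i j →
            ∀ (j' : ℕ), (j:ℕ) ≤ j' → ∀ (hj' : j' < n+1), 0 < M i ⟨j', hj'⟩ := by
          intro i j hij hp
          refine Nat.le_induction ?_ ?_
          · intro h
            have he : (⟨(j:ℕ), h⟩ : Fin (n+1)) = j := rfl
            rwa [he]
          · intro m hm IHm hm1
            have hmlt : m < n+1 := by omega
            have hprev := IHm hmlt
            have hne : i ≠ (⟨m, hmlt⟩ : Fin (n+1)) := by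
              intro hc
              have : (i:ℕ) = m := by rw [hc]
              omega
            have hstep := (hI i ⟨m, hmlt⟩ hne hprev).2 hm1
            exact lt_of_lt_of_le hprev hstep
        have hi00 : (i0:ℕ) = 0 := by omega
        have hj0pos : 0 < (j0:ℕ) := by
          rcases Nat.eq_zero_or_pos (j0:ℕ) with h | h
          · exfalso; exact hij0 (Fin.ext (by omega))
          · exact h
        have hlastpos : 0 < M i0 (Fin.last n) := by
          have := chainJ i0 j0 (by omega) hpos0 n (by omega) (Nat.lt_succ_self n)
          exact this
        have chainI : ∀ (i' : ℕ), (i0:ℕ) ≤ i' → ∀ (hi' : i' < n),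
            0 < M ⟨i', by omega⟩ (Fin.last n) := by
          refine Nat.le_induction ?_ ?_
          · intro _; exact hlastpos
          · intro m hm IHm hm1
            have hmn : m < n := by omega
            have hprev := IHm hmn
            have hne : (⟨m, by omega⟩ : Fin (n+1)) ≠ Fin.last n := by
              intro hc
              have : m = n := by simpa [Fin.ext_iff] using hc
              omega
            have hstep := (hI ⟨m, by omega⟩ (Fin.last n) hne hprev).1 (show m+1 < n+1 by omega)
            exact lt_of_lt_of_le hprev hstep
        have hcol : ∀ i : Fin n, 0 < M i.castSucc (Fin.last n) := by
          intro i
          exact chainI (i:ℕ) (by omega) i.isLt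
        -- the leading principal submatrix
        set M' : Matrix (Fin n) (Fin n) ℝ :=
          Matrix.of (fun i j => M i.castSucc j.castSucc) with hM'def
        have hM'symm : M'.IsSymm := by
          rw [Matrix.IsSymm.ext_iff]
          intro i j
          exact hM.apply _ _
        have hM'cop : Copositive M' := by
          intro x hx
          have hy : ∀ i : Fin (n+1), 0 ≤ (Fin.snoc x 0 : Fin (n+1) → ℝ) i := by
            intro i
            rcases Fin.eq_castSucc_or_eq_last i with ⟨i', rfl⟩ | rfl
            · rw [Fin.snoc_castSucc]; exact hx i'
            · rw [Fin.snoc_last]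
          have hqe : x ⬝ᵥ M'.mulVec x
              = (Fin.snoc x 0 : Fin (n+1) → ℝ) ⬝ᵥ M.mulVec (Fin.snoc x 0) := by
            rw [quadForm_expand, quadForm_expand, Fin.sum_univ_castSucc]
            simp [Fin.sum_univ_castSucc, hM'def]
          rw [hqe]
          exact hcop _ hy
        have hM'I : ∀ i j : Fin n, i ≠ j → 0 < M' i j →
            (∀ h : (i:ℕ)+1 < n, M' i j ≤ M' ⟨(i:ℕ)+1, h⟩ j) ∧
            (∀ h : (j:ℕ)+1 < n, M' i j ≤ M' i ⟨(j:ℕ)+1, h⟩) := by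
          intro i j hij hp
          have hne : i.castSucc ≠ j.castSucc := fun h => hij (Fin.castSucc_injective _ h)
          have hp' : 0 < M i.castSucc j.castSucc := hp
          constructor
          · intro h
            exact (hI i.castSucc j.castSucc hne hp').1 (show (i:ℕ)+1 < n+1 by omega)
          · intro h
            exact (hI i.castSucc j.castSucc hne hp').2 (show (j:ℕ)+1 < n+1 by omega)
        have hM'II : ∀ (i j : Fin n) (h : (j:ℕ)+1 < n), (i:ℕ)+1 < n →
            posIdx M' ≤ (j:ℕ)+1 → (i:ℕ) < (j:ℕ) → M' i j ≤ M' i ⟨(j:ℕ)+1, h⟩ := by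
          intro i j h h1 _ hij
          exact hII' i.castSucc j.castSucc (show (j:ℕ)+1 < n+1 by omega)
            (show (i:ℕ)+1 < n+1 by omega) (by omega) hij
        obtain ⟨P', N', hP', hN', hEq'⟩ := IH M' hM'symm hM'I hM'II hM'cop
        refine ⟨embL P', M - embL P', embL_psd hP', ?_, by abel⟩
        intro i j
        have hNval : ∀ i' j' : Fin n, N' i' j' = M' i' j' - P' i' j' := by
          intro i' j'
          rw [hEq']
          simp [Matrix.add_apply]
        rw [Matrix.sub_apply]
        rcases Fin.eq_castSucc_or_eq_last i with ⟨i', rfl⟩ | rfl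
        · rcases Fin.eq_castSucc_or_eq_last j with ⟨j', rfl⟩ | rfl
          · rw [embL_cast_cast]
            have := hN' i' j'
            rw [hNval i' j'] at this
            simpa [hM'def] using this
          · rw [embL_cast_last]
            have := le_of_lt (hcol i')
            linarith
        · rcases Fin.eq_castSucc_or_eq_last j with ⟨j', rfl⟩ | rfl
          · rw [embL_last]
            have h1 : M j'.castSucc (Fin.last n) = M (Fin.last n) j'.castSucc := (hM.apply _ _).symm
            have := le_of_lt (hcol j')
            rw [h1] at this
            linarith
          · rw [embL_last]
            have := hdiag (Fin.last n)
            linarith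
      · -- Case B2 : peel off the first row and column
        have hrow0 : ∀ j : Fin (n+1), j ≠ 0 → M 0 j ≤ 0 := by
          intro j hj
          by_contra hcon
          push_neg at hcon
          have := hrow 0 j (fun h => hj h.symm) hcon
          simp at this
          omega
        have hr0 : M 0 0 = 0 → ∀ j : Fin (n+1), M 0 j = 0 := by
          intro hz j
          by_cases hj : j = 0
          · rw [hj]; exact hz
          · have hle0 := hrow0 j hj
            by_contra hne0
            have hlt : M 0 j < 0 := lt_of_le_of_ne hle0 hne0
            set t := (M j j + 1) / (-(2 * M 0 j)) with htdef
            have ht : 0 ≤ t := div_nonneg (by linarith [hdiag j]) (by linarith)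
            have hxnn : ∀ k, 0 ≤ ((Pi.single 0 t + Pi.single j 1 : Fin (n+1) → ℝ)) k := by
              intro k
              simp only [Pi.add_apply, Pi.single_apply]
              split <;> split <;> (try norm_num) <;> linarith
            have hq := hcop _ hxnn
            rw [quad_pair] at hq
            have hsym : M j 0 = M 0 j := hM.apply 0 j
            rw [hz, hsym] at hq
            have htm : t * M 0 j = -(M j j + 1) / 2 := by
              rw [htdef]
              field_simp
            nlinarith [hq, htm]
        set β : ℝ := if M 0 0 = 0 then (0:ℝ) else (M 0 0)⁻¹ with hβdef
        have hβ0 : 0 ≤ β := by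
          rw [hβdef]
          split
          · exact le_refl 0
          · exact inv_nonneg.2 (hdiag 0)
        have hid : M 0 0 * β * β = β := by
          rw [hβdef]
          by_cases hz : M 0 0 = 0
          · simp [hz]
          · rw [if_neg hz]; field_simp
        have hr : ∀ k : Fin n, M 0 k.succ ≤ 0 := fun k => hrow0 k.succ (Fin.succ_ne_zero k)
        have hrr : ∀ i j : Fin n, 0 ≤ M 0 i.succ * M 0 j.succ := by
          intro i j
          have := mul_nonneg (neg_nonneg.2 (hr i)) (neg_nonneg.2 (hr j))
          rwa [neg_mul_neg] at this
        set S : Matrix (Fin n) (Fin n) ℝ :=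
          Matrix.of (fun i j => M i.succ j.succ - β * (M 0 i.succ * M 0 j.succ)) with hSdef
        have hSapp : ∀ i j : Fin n, S i j = M i.succ j.succ - β * (M 0 i.succ * M 0 j.succ) :=
          fun i j => rfl
        have hSM : ∀ i j : Fin n, S i j ≤ M i.succ j.succ := by
          intro i j
          rw [hSapp]
          have := mul_nonneg hβ0 (hrr i j)
          linarith
        have hSsymm : S.IsSymm := by
          rw [Matrix.IsSymm.ext_iff]
          intro i j
          rw [hSapp, hSapp, hM.apply j.succ i.succ]
          ring
        have hScop : Copositive S := by
          intro x hx
          set G := ∑ j : Fin n, M 0 j.succ * x j with hGdef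
          have hG0 : G ≤ 0 := by
            rw [hGdef]
            refine Finset.sum_nonpos fun j _ => ?_
            exact mul_nonpos_of_nonpos_of_nonneg (hr j) (hx j)
          set t := -(β * G) with htdef
          have ht0 : 0 ≤ t := by
            rw [htdef]
            nlinarith [hβ0, hG0]
          have hy : ∀ i : Fin (n+1), 0 ≤ (Fin.cases t x : Fin (n+1) → ℝ) i := by
            intro i
            rcases Fin.eq_zero_or_eq_succ i with rfl | ⟨i', rfl⟩
            · simpa using ht0
            · simpa using hx i'
          have hmain := hcop (Fin.cases t x) hy
          have expand : (Fin.cases t x : Fin (n+1) → ℝ) ⬝ᵥ M.mulVec (Fin.cases t x)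
              = t * M 0 0 * t + (∑ j : Fin n, t * M 0 j.succ * x j)
                + ((∑ i : Fin n, x i * M i.succ 0 * t)
                  + ∑ i : Fin n, ∑ j : Fin n, x i * M i.succ j.succ * x j) := by
            rw [quadForm_expand, Fin.sum_univ_succ]
            congr 1
            · rw [Fin.sum_univ_succ]
              simp
            · rw [← Finset.sum_add_distrib]
              refine Finset.sum_congr rfl fun i _ => ?_
              rw [Fin.sum_univ_succ]
              simp
          have e1 : ∑ j : Fin n, t * M 0 j.succ * x j = t * G := by
            rw [hGdef, Finset.mul_sum]
            exact Finset.sum_congr rfl fun j _ => by ring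
          have e2 : ∑ i : Fin n, x i * M i.succ 0 * t = t * G := by
            rw [hGdef, Finset.mul_sum]
            refine Finset.sum_congr rfl fun i _ => ?_
            rw [hM.apply 0 i.succ]
            ring
          rw [e1, e2] at expand
          have expandS : x ⬝ᵥ S.mulVec x
              = (∑ i : Fin n, ∑ j : Fin n, x i * M i.succ j.succ * x j) - β * (G * G) := by
            rw [quadForm_expand]
            have hterm : ∀ i j : Fin n, x i * S i j * x j
                = x i * M i.succ j.succ * x j
                  - (M 0 i.succ * x i) * β * (M 0 j.succ * x j) := by
              intro i j
              rw [hSapp]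
              ring
            rw [Finset.sum_congr rfl fun i _ => Finset.sum_congr rfl fun j _ => hterm i j]
            rw [Finset.sum_congr rfl fun i (_ : i ∈ Finset.univ) => Finset.sum_sub_distrib _ _,
              Finset.sum_sub_distrib]
            congr 1
            have estep : ∀ i : Fin n, ∑ j : Fin n, (M 0 i.succ * x i) * β * (M 0 j.succ * x j)
                = (M 0 i.succ * x i) * β * G := by
              intro i
              rw [hGdef, Finset.mul_sum]
            rw [Finset.sum_congr rfl fun i _ => estep i, ← Finset.sum_mul, ← Finset.sum_mul,
              ← hGdef]
            ring
          rw [expandS]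
          rw [expand] at hmain
          have hkey : t * M 0 0 * t + t * G + (t * G + 0) = -(β * (G * G)) := by
            rw [htdef]
            ring_nf
            nlinarith [hid]
          nlinarith [hmain, hkey]
        have hSI : ∀ i j : Fin n, i ≠ j → 0 < S i j →
            (∀ h : (i:ℕ)+1 < n, S i j ≤ S ⟨(i:ℕ)+1, h⟩ j) ∧
            (∀ h : (j:ℕ)+1 < n, S i j ≤ S i ⟨(j:ℕ)+1, h⟩) := by
          intro i j hij hSp
          have hMp : 0 < M i.succ j.succ := lt_of_lt_of_le hSp (hSM i j)
          have hne : i.succ ≠ j.succ := fun h => hij (Fin.succ_injective _ h)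
          have hai : a ≤ (i:ℕ)+1 := hrow i.succ j.succ hne hMp
          have hMpji : 0 < M j.succ i.succ := by rw [hM.apply]; exact hMp
          have haj : a ≤ (j:ℕ)+1 := hrow j.succ i.succ (fun h => hne h.symm) hMpji
          constructor
          · intro h
            have hlt : (i:ℕ)+2 < n+1 := by omega
            have hidx : ((⟨(i:ℕ)+1, h⟩ : Fin n)).succ = (⟨(i:ℕ)+2, hlt⟩ : Fin (n+1)) := rfl
            have hstepM : M i.succ j.succ ≤ M ⟨(i:ℕ)+2, hlt⟩ j.succ :=
              (hI i.succ j.succ hne hMp).1 hlt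
            have hstepq : M 0 i.succ ≤ M 0 ⟨(i:ℕ)+2, hlt⟩ :=
              hII' 0 i.succ hlt (by simp only [Fin.val_zero]; omega)
                (by simp only [Fin.val_succ]; omega)
                (by simp only [Fin.val_zero, Fin.val_succ]; omega)
            have hqj := hr j
            have hprod : M 0 (⟨(i:ℕ)+2, hlt⟩ : Fin (n+1)) * M 0 j.succ
                ≤ M 0 i.succ * M 0 j.succ := mul_le_mul_of_nonpos_right hstepq hqj
            have hβprod := mul_le_mul_of_nonneg_left hprod hβ0
            rw [hSapp, hSapp, hidx]
            linarith [hβprod, hstepM]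
          · intro h
            have hlt : (j:ℕ)+2 < n+1 := by omega
            have hidx : ((⟨(j:ℕ)+1, h⟩ : Fin n)).succ = (⟨(j:ℕ)+2, hlt⟩ : Fin (n+1)) := rfl
            have hstepM : M i.succ j.succ ≤ M i.succ ⟨(j:ℕ)+2, hlt⟩ :=
              (hI i.succ j.succ hne hMp).2 hlt
            have hstepq : M 0 j.succ ≤ M 0 ⟨(j:ℕ)+2, hlt⟩ :=
              hII' 0 j.succ hlt (by simp only [Fin.val_zero]; omega)
                (by simp only [Fin.val_succ]; omega)
                (by simp only [Fin.val_zero, Fin.val_succ]; omega)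
            have hqi := hr i
            have hprod : M 0 i.succ * M 0 (⟨(j:ℕ)+2, hlt⟩ : Fin (n+1))
                ≤ M 0 i.succ * M 0 j.succ := mul_le_mul_of_nonpos_left hstepq hqi
            have hβprod := mul_le_mul_of_nonneg_left hprod hβ0
            rw [hSapp, hSapp, hidx]
            linarith [hβprod, hstepM]
        have hSII : ∀ (i j : Fin n) (h : (j:ℕ)+1 < n), (i:ℕ)+1 < n →
            posIdx S ≤ (j:ℕ)+1 → (i:ℕ) < (j:ℕ) → S i j ≤ S i ⟨(j:ℕ)+1, h⟩ := by
          intro i j h h1 hps hij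
          have hlb : a ≤ posIdx S := by
            simp only [posIdx]
            split
            · next hex =>
              refine le_csInf ?_ ?_
              · obtain ⟨i', j', hij', hp'⟩ := hex
                exact ⟨(i':ℕ)+1, i', j', rfl, hij', hp'⟩
              · rintro b ⟨i', j', rfl, hij', hp'⟩
                have hMp' : 0 < M i'.succ j'.succ := lt_of_lt_of_le hp' (hSM i' j')
                have := hrow i'.succ j'.succ (fun hcc => hij' (Fin.succ_injective _ hcc)) hMp'
                simpa using this
            · have := i0.isLt
              omega
          have haj : a ≤ (j:ℕ)+1 := by omega
          have hlt : (j:ℕ)+2 < n+1 := by omega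
          have hidx : ((⟨(j:ℕ)+1, h⟩ : Fin n)).succ = (⟨(j:ℕ)+2, hlt⟩ : Fin (n+1)) := rfl
          have hstepM : M i.succ j.succ ≤ M i.succ ⟨(j:ℕ)+2, hlt⟩ :=
            hII' i.succ j.succ hlt (by simp only [Fin.val_succ]; omega)
              (by simp only [Fin.val_succ]; omega) (by simp only [Fin.val_succ]; omega)
          have hstepq : M 0 j.succ ≤ M 0 ⟨(j:ℕ)+2, hlt⟩ :=
            hII' 0 j.succ hlt (by simp only [Fin.val_zero]; omega)
              (by simp only [Fin.val_succ]; omega)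
              (by simp only [Fin.val_zero, Fin.val_succ]; omega)
          have hqi := hr i
          have hprod : M 0 i.succ * M 0 (⟨(j:ℕ)+2, hlt⟩ : Fin (n+1))
              ≤ M 0 i.succ * M 0 j.succ := mul_le_mul_of_nonpos_left hstepq hqi
          have hβprod := mul_le_mul_of_nonneg_left hprod hβ0
          rw [hSapp, hSapp, hidx]
          linarith [hβprod, hstepM]
        obtain ⟨P, N, hP, hN, hEq⟩ := IH S hSsymm hSI hSII hScop
        set R : Matrix (Fin (n+1)) (Fin (n+1)) ℝ :=
          Matrix.of (fun i j => β * (M 0 i * M 0 j)) with hRdef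
        have hRapp : ∀ i j : Fin (n+1), R i j = β * (M 0 i * M 0 j) := fun i j => rfl
        have hRpsd : R.PosSemidef := by
          apply posSemidef_of
          · rw [Matrix.IsSymm.ext_iff]
            intro i j
            rw [hRapp, hRapp]
            ring
          · intro x
            rw [quadForm_expand]
            have hterm : ∀ i j : Fin (n+1), x i * R i j * x j
                = (M 0 i * x i) * β * (M 0 j * x j) := by
              intro i j
              rw [hRapp]
              ring
            rw [Finset.sum_congr rfl fun i _ => Finset.sum_congr rfl fun j _ => hterm i j]
            have estep : ∀ i : Fin (n+1), ∑ j : Fin (n+1), (M 0 i * x i) * β * (M 0 j * x j)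
                = (M 0 i * x i) * β * (∑ j : Fin (n+1), M 0 j * x j) := by
              intro i
              rw [Finset.mul_sum]
            rw [Finset.sum_congr rfl fun i _ => estep i, ← Finset.sum_mul, ← Finset.sum_mul]
            nlinarith [hβ0, mul_self_nonneg (∑ j : Fin (n+1), M 0 j * x j)]
        have hSentry : ∀ i' j' : Fin n, P i' j' + N i' j' = S i' j' := by
          intro i' j'
          rw [hEq]
          simp [Matrix.add_apply]
        refine ⟨R + emb0 P, emb0 N, hRpsd.add (emb0_psd hP), ?_, ?_⟩
        · intro i j
          rcases Fin.eq_zero_or_eq_succ i with rfl | ⟨i', rfl⟩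
          · rw [emb0_zero]
          · rcases Fin.eq_zero_or_eq_succ j with rfl | ⟨j', rfl⟩
            · rw [emb0_succ_zero]
            · rw [emb0_succ_succ]
              exact hN i' j'
        · ext i j
          simp only [Matrix.add_apply]
          rcases Fin.eq_zero_or_eq_succ i with rfl | ⟨i', rfl⟩
          · rcases Fin.eq_zero_or_eq_succ j with rfl | ⟨j', rfl⟩
            · rw [emb0_zero, emb0_zero, hRapp]
              by_cases hz : M 0 0 = 0
              · rw [hz, hβdef, if_pos hz]
                ring
              · rw [hβdef, if_neg hz]
                field_simp
                ring
            · rw [emb0_zero, emb0_zero, hRapp]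
              by_cases hz : M 0 0 = 0
              · rw [hr0 hz j'.succ, hr0 hz 0]
                ring
              · rw [hβdef, if_neg hz]
                field_simp
                ring
          · rcases Fin.eq_zero_or_eq_succ j with rfl | ⟨j', rfl⟩
            · rw [emb0_succ_zero, emb0_succ_zero, hRapp]
              have hsym : M i'.succ 0 = M 0 i'.succ := hM.apply 0 i'.succ
              by_cases hz : M 0 0 = 0
              · rw [hsym, hr0 hz i'.succ, hr0 hz 0]
                ring
              · rw [hβdef, if_neg hz, hsym]
                field_simp
                ring
            · rw [emb0_succ_succ, emb0_succ_succ, hRapp]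
              have hPN := hSentry i' j'
              rw [hSapp] at hPN
              linarith [hPN]
    · push_neg at hpos
      exact ⟨M, 0, psd_of_offdiag_nonpos hM hcop (fun i j hij => hpos i j hij),
        fun i j => le_refl 0, (add_zero M).symm⟩

end SPN_aux

theorem stmt_12 {n : ℕ} (M : Matrix (Fin n) (Fin n) ℝ) (hM : M.IsSymm)
    (hI : ∀ i j : Fin n, i ≠ j → 0 < M i j →
      (∀ h : (i : ℕ) + 1 < n, M i j ≤ M ⟨(i : ℕ) + 1, h⟩ j) ∧
      (∀ h : (j : ℕ) + 1 < n, M i j ≤ M i ⟨(j : ℕ) + 1, h⟩))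
    (hII : ∀ (i j : Fin n) (h : (j : ℕ) + 1 < n), (i : ℕ) + 1 < n →
      posIdx M ≤ (j : ℕ) + 1 → (i : ℕ) < (j : ℕ) →
      M i j ≤ M i ⟨(j : ℕ) + 1, h⟩)
    (hcop : Copositive M) :
    SPN M := SPN_aux.key n M hM hI hII hcop
end

section
/- Let M = [[A, B],[B^T, C]] be a symmetric (k+n)×(k+n) matrix where A has nonpositive off-diagonal entries, B is entrywise nonpositive with each row nondecreasing, and C ∈ ℳ_n (off-diagonal entries nondecreasing in rows and columns). If M is copositive, then M is SPN. -/
open Matrix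
set_option linter.unusedSectionVars false

namespace SPNAux

variable {ι ι' : Type*} [Fintype ι] [DecidableEq ι] [Fintype ι'] [DecidableEq ι']

lemma copos_diag {M : Matrix ι ι ℝ} (hM : Copositive M) (j : ι) : 0 ≤ M j j := by
  have h := hM (Pi.single j 1) (fun i => by
    by_cases h : i = j <;> simp [Pi.single_apply, h])
  simpa [single_dotProduct, mulVec_single] using h

lemma quad_expand (M : Matrix ι ι ℝ) (hs : M.IsSymm) (x : ι → ℝ) (c : ℝ) (j₀ : ι) :
    (x + c • (Pi.single j₀ 1 : ι → ℝ)) ⬝ᵥ M *ᵥ (x + c • (Pi.single j₀ 1 : ι → ℝ))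
      = x ⬝ᵥ M *ᵥ x + 2 * c * ((fun p => M p j₀) ⬝ᵥ x) + c ^ 2 * M j₀ j₀ := by
  have hMx : ∀ p, M p j₀ = M j₀ p := fun p => by
    conv_lhs => rw [← hs]
    rfl
  have h1 : M *ᵥ (c • (Pi.single j₀ 1 : ι → ℝ)) = c • fun p => M p j₀ := by
    rw [mulVec_smul]
    congr 1
    ext p
    simp [mulVec_single]
  have h2 : (fun p => M p j₀) ⬝ᵥ x = (M *ᵥ x) j₀ := by
    simp [mulVec, dotProduct]
    exact Finset.sum_congr rfl (fun p _ => by rw [hMx])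
  have h3 : x ⬝ᵥ (fun p => M p j₀) = (fun p => M p j₀) ⬝ᵥ x := dotProduct_comm _ _
  simp only [mulVec_add, h1, add_dotProduct, dotProduct_add, dotProduct_smul,
    smul_dotProduct, smul_eq_mul, single_dotProduct, one_mul, h3, h2]
  ring

end SPNAux

namespace SPNAux

variable {ι ι' : Type*} [Fintype ι] [DecidableEq ι] [Fintype ι'] [DecidableEq ι']

lemma copos_col_nonneg_of_diag_zero {M : Matrix ι ι ℝ} (hM : Copositive M) (hs : M.IsSymm)
    {j₀ : ι} (hjj : M j₀ j₀ = 0) (l : ι) : 0 ≤ M l j₀ := by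
  rcases eq_or_ne l j₀ with h | h
  · subst h; rw [hjj]
  have key : ∀ ε : ℝ, 0 < ε → 0 ≤ ε ^ 2 * M l l + 2 * ε * M l j₀ := by
    intro ε hε
    have hx : ∀ p, 0 ≤ (ε • (Pi.single l 1 : ι → ℝ) + (1:ℝ) • (Pi.single j₀ 1 : ι → ℝ)) p := by
      intro p
      have hval : (ε • (Pi.single l 1 : ι → ℝ) + (1:ℝ) • (Pi.single j₀ 1 : ι → ℝ)) p
          = ε * (if p = l then 1 else 0) + (if p = j₀ then 1 else 0) := by
        simp [Pi.single_apply]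
      rw [hval]
      split_ifs <;> linarith
    have h0 := hM _ hx
    rw [quad_expand M hs (ε • (Pi.single l 1 : ι → ℝ)) 1 j₀] at h0
    have hd : (fun p => M p j₀) ⬝ᵥ (ε • (Pi.single l 1 : ι → ℝ)) = ε * M l j₀ := by
      simp [dotProduct_smul, dotProduct_single]
    have hq : (ε • (Pi.single l 1 : ι → ℝ)) ⬝ᵥ M *ᵥ (ε • (Pi.single l 1 : ι → ℝ))
        = ε ^ 2 * M l l := by
      rw [smul_dotProduct, mulVec_smul, dotProduct_smul]
      simp only [single_dotProduct, one_mul, smul_eq_mul, mulVec_single, single_dotProduct]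
      simp [mulVec_single]
      ring
    rw [hq, hd, hjj] at h0
    nlinarith [h0]
  have key2 : ∀ ε : ℝ, 0 < ε → 0 ≤ ε * M l l + 2 * M l j₀ := by
    intro ε hε
    have h := key ε hε
    by_contra hc
    push_neg at hc
    have hc' : 0 < -(ε * M l l + 2 * M l j₀) := by linarith
    have hm := mul_pos hε hc'
    have hid : ε * -(ε * M l l + 2 * M l j₀) = -(ε ^ 2 * M l l + 2 * ε * M l j₀) := by ring
    rw [hid] at hm
    linarith
  by_contra hneg
  push_neg at hneg
  rcases le_or_gt (M l l) 0 with hll | hll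
  · linarith [key2 1 one_pos]
  · have hε : 0 < -M l j₀ / M l l := div_pos (by linarith) hll
    have h := key2 _ hε
    rw [div_mul_cancel₀ _ (ne_of_gt hll)] at h
    linarith

lemma quad_vecMulVec (q x : ι → ℝ) : x ⬝ᵥ (vecMulVec q q) *ᵥ x = (q ⬝ᵥ x) ^ 2 := by
  have h1 : (vecMulVec q q) *ᵥ x = fun p => q p * (q ⬝ᵥ x) := by
    ext p
    simp [vecMulVec, mulVec, dotProduct, Finset.mul_sum, mul_assoc]
  rw [h1]
  have : x ⬝ᵥ (fun p => q p * (q ⬝ᵥ x)) = (x ⬝ᵥ q) * (q ⬝ᵥ x) := by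
    simp [dotProduct, Finset.sum_mul, mul_assoc]
  rw [this, dotProduct_comm]
  ring

lemma vecMulVec_posSemidef {q : ι → ℝ} {c : ℝ} (hc : 0 ≤ c) :
    (c • vecMulVec q q).PosSemidef := by
  refine posSemidef_iff_dotProduct_mulVec.2 ⟨?_, ?_⟩
  · rw [IsHermitian, conjTranspose_eq_transpose_of_trivial]
    ext i j
    simp [vecMulVec, mul_comm]
  · intro x
    have hstar : (star x : ι → ℝ) = x := funext fun p => star_trivial _
    rw [hstar, smul_mulVec, dotProduct_smul, smul_eq_mul, quad_vecMulVec]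
    exact mul_nonneg hc (sq_nonneg _)

end SPNAux

namespace SPNAux

variable {ι ι' : Type*} [Fintype ι] [DecidableEq ι] [Fintype ι'] [DecidableEq ι']

section PeelRankOne

variable {M : Matrix ι ι ℝ} {j₀ : ι}

lemma peel_sub_isSymm (hs : M.IsSymm) (c : ℝ) :
    (M - c • vecMulVec (fun p => M p j₀) (fun p => M p j₀)).IsSymm := by
  have h : ∀ i j : ι, M j i = M i j := fun i j => by
    have := congrFun (congrFun hs i) j
    simpa using this
  show _ᵀ = _
  ext i j
  simp only [transpose_apply, Matrix.sub_apply, Matrix.smul_apply, vecMulVec, of_apply, smul_eq_mul]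
  rw [h i j]
  ring

lemma peel_copos (hM : Copositive M) (hs : M.IsSymm)
    (hγ : 0 < M j₀ j₀) (hq : ∀ p, p ≠ j₀ → M p j₀ ≤ 0) :
    Copositive (M - (M j₀ j₀)⁻¹ • vecMulVec (fun p => M p j₀) (fun p => M p j₀)) := by
  intro x hx
  set γ := M j₀ j₀ with hγdef
  set q : ι → ℝ := fun p => M p j₀ with hqdef
  set s := q ⬝ᵥ x with hsdef
  have hγ' : γ ≠ 0 := ne_of_gt hγ
  have hqx_le : s ≤ γ * x j₀ := by
    have hterm : ∀ p ∈ Finset.univ, q p * x p ≤ (if p = j₀ then γ * x j₀ else 0) := by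
      intro p _
      rcases eq_or_ne p j₀ with h | h
      · rw [h]; simp; exact le_rfl
      · rw [if_neg h]
        exact mul_nonpos_of_nonpos_of_nonneg (hq p h) (hx p)
    calc s = ∑ p, q p * x p := rfl
      _ ≤ ∑ p, (if p = j₀ then γ * x j₀ else 0) := Finset.sum_le_sum hterm
      _ = γ * x j₀ := by rw [Finset.sum_ite_eq' Finset.univ j₀ (fun _ => γ * x j₀)]; simp
  set c := -s / γ with hcdef
  have hz : ∀ p, 0 ≤ (x + c • (Pi.single j₀ 1 : ι → ℝ)) p := by
    intro p
    rcases eq_or_ne p j₀ with h | h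
    · rw [h]
      have h1 : s / γ ≤ x j₀ := by
        rw [div_le_iff₀ hγ]
        linarith [hqx_le]
      simp only [Pi.add_apply, Pi.smul_apply, Pi.single_eq_same, smul_eq_mul, mul_one, hcdef]
      have h2 : -s / γ = -(s / γ) := by ring
      rw [h2]
      linarith
    · have h3 : (x + c • (Pi.single j₀ 1 : ι → ℝ)) p = x p := by
        simp [Pi.single_eq_of_ne h]
      rw [h3]; exact hx p
  have h0 := hM _ hz
  rw [quad_expand M hs x c j₀] at h0
  have hvq : x ⬝ᵥ (vecMulVec q q) *ᵥ x = s ^ 2 := by rw [quad_vecMulVec]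
  rw [sub_mulVec, dotProduct_sub, smul_mulVec, dotProduct_smul, smul_eq_mul, hvq]
  have e1 : c ^ 2 * γ = s ^ 2 / γ := by
    rw [hcdef]; field_simp [hγ']
  have e2 : 2 * c * s = -(2 * (s ^ 2 / γ)) := by
    rw [hcdef]; field_simp [hγ']
  rw [← hsdef, ← hγdef, e1, e2] at h0
  have e3 : γ⁻¹ * s ^ 2 = s ^ 2 / γ := by rw [inv_mul_eq_div]
  rw [e3]
  linarith

lemma peel_zero_col (hγ : M j₀ j₀ ≠ 0) :
    ∀ p, (M - (M j₀ j₀)⁻¹ • vecMulVec (fun p => M p j₀) (fun p => M p j₀)) p j₀ = 0 := by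
  intro p
  simp only [Matrix.sub_apply, Matrix.smul_apply, vecMulVec, of_apply, smul_eq_mul]
  field_simp
  ring

lemma peel_decomp (c : ℝ) :
    M = (M - c • vecMulVec (fun p => M p j₀) (fun p => M p j₀))
        + c • vecMulVec (fun p => M p j₀) (fun p => M p j₀) := by
  rw [sub_add_cancel]

end PeelRankOne

lemma spn_add_posSemidef {M G : Matrix ι ι ℝ} (h : SPN M) (hG : G.PosSemidef) : SPN (M + G) := by
  obtain ⟨P, N, hP, hN, rfl⟩ := h
  exact ⟨P + G, N, hP.add hG, hN, by abel⟩

lemma spn_add_nonneg {M R : Matrix ι ι ℝ} (h : SPN M) (hR : ∀ i j, 0 ≤ R i j) : SPN (M + R) := by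
  obtain ⟨P, N, hP, hN, rfl⟩ := h
  exact ⟨P, N + R, hP, fun i j => add_nonneg (hN i j) (hR i j), by abel⟩

lemma copos_submatrix {M : Matrix ι ι ℝ} (hM : Copositive M) (g : ι' → ι) :
    Copositive (M.submatrix g g) := by
  intro x hx
  set y : ι → ℝ := fun i => ∑ p, if g p = i then x p else 0 with hy
  have hynn : ∀ i, 0 ≤ y i := by
    intro i
    refine Finset.sum_nonneg fun p _ => ?_
    split_ifs
    · exact hx p
    · exact le_refl 0
  have hMy : ∀ i, (M *ᵥ y) i = ∑ r, M i (g r) * x r := by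
    intro i
    simp only [mulVec, dotProduct, hy, Finset.mul_sum]
    rw [Finset.sum_comm]
    refine Finset.sum_congr rfl fun r _ => ?_
    rw [Finset.sum_eq_single (g r)]
    · simp
    · intro b _ hb
      simp [Ne.symm hb, mul_ite, mul_zero]
    · intro hmem; exact absurd (Finset.mem_univ _) hmem
  have hkey : y ⬝ᵥ M *ᵥ y = x ⬝ᵥ (M.submatrix g g) *ᵥ x := by
    simp only [dotProduct, hy, Finset.sum_mul]
    rw [Finset.sum_comm]
    refine Finset.sum_congr rfl fun p _ => ?_
    rw [Finset.sum_eq_single (g p)]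
    · rw [if_pos rfl, hMy]
      simp [mulVec, dotProduct, submatrix_apply, Finset.mul_sum]
    · intro b _ hb
      simp [Ne.symm hb, ite_mul, zero_mul]
    · intro hmem; exact absurd (Finset.mem_univ _) hmem
  rw [← hkey]
  exact hM y hynn

end SPNAux

namespace SPNAux

variable {ι ι' : Type*} [Fintype ι] [DecidableEq ι] [Fintype ι'] [DecidableEq ι']

/-- zero out a row and column -/
def zeroOut (M : Matrix ι ι ℝ) (j₀ : ι) : Matrix ι ι ℝ :=
  Matrix.of fun p r => if p = j₀ ∨ r = j₀ then 0 else M p r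

lemma zeroOut_copos {M : Matrix ι ι ℝ} (hM : Copositive M) (j₀ : ι) :
    Copositive (zeroOut M j₀) := by
  intro x hx
  have hx'nn : ∀ p, 0 ≤ (fun p => if p = j₀ then 0 else x p) p := by
    intro p
    by_cases h : p = j₀ <;> simp [h, hx p]
  have hkey : x ⬝ᵥ (zeroOut M j₀) *ᵥ x
      = (fun p => if p = j₀ then 0 else x p) ⬝ᵥ M *ᵥ (fun p => if p = j₀ then 0 else x p) := by
    simp only [dotProduct, mulVec, Finset.mul_sum]
    refine Finset.sum_congr rfl fun p _ => Finset.sum_congr rfl fun r _ => ?_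
    by_cases hp : p = j₀ <;> by_cases hr : r = j₀ <;>
      simp [zeroOut, hp, hr]
  rw [hkey]
  exact hM _ hx'nn

lemma zeroOut_rest_nonneg {M : Matrix ι ι ℝ} (hs : M.IsSymm) {j₀ : ι}
    (hcol : ∀ p, 0 ≤ M p j₀) : ∀ p r, 0 ≤ (M - zeroOut M j₀) p r := by
  intro p r
  have hsym : ∀ i j : ι, M j i = M i j := fun i j => by
    have := congrFun (congrFun hs i) j; simpa using this
  simp only [Matrix.sub_apply, zeroOut, of_apply]
  by_cases hp : p = j₀ <;> by_cases hr : r = j₀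
  · simp [hp, hr]; exact hcol j₀
  · simp [hp, hr]
    rw [← hsym j₀ r]
    exact hcol r
  · simp [hp, hr]
    exact hcol p
  · simp [hp, hr]

lemma zeroOut_decomp (M : Matrix ι ι ℝ) (j₀ : ι) :
    M = zeroOut M j₀ + (M - zeroOut M j₀) := by
  rw [add_sub_cancel]

lemma spn_extend {M : Matrix ι ι ℝ} {j₀ : ι} (g : ι' → ι)
    (hginj : Function.Injective g) (hgne : ∀ p, g p ≠ j₀)
    (hsurj : ∀ i, i ≠ j₀ → ∃ p, g p = i)
    (hzero : ∀ p, M j₀ p = 0) (hzero' : ∀ p, M p j₀ = 0)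
    (h : SPN (M.submatrix g g)) : SPN M := by
  obtain ⟨P, N, hP, hN, hPN⟩ := h
  set Q : Matrix ι' ι ℝ := Matrix.of (fun p i => if g p = i then (1:ℝ) else 0) with hQ
  have hQt : ∀ (T : Matrix ι' ι' ℝ) (r : ι') (i : ι),
      (Qᵀ * T) i r = ∑ p, (if g p = i then T p r else 0) := by
    intro T r i
    rw [Matrix.mul_apply]
    refine Finset.sum_congr rfl fun p _ => ?_
    by_cases h1 : g p = i <;> simp [hQ, h1]
  have key : ∀ (T : Matrix ι' ι' ℝ) (i j : ι), (Qᵀ * T * Q) i j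
      = ∑ r, ∑ p, (if g p = i ∧ g r = j then T p r else 0) := by
    intro T i j
    rw [Matrix.mul_apply]
    refine Finset.sum_congr rfl fun r _ => ?_
    rw [hQt, Finset.sum_mul]
    refine Finset.sum_congr rfl fun p _ => ?_
    by_cases h1 : g p = i <;> by_cases h2 : g r = j <;> simp [hQ, h1, h2]
  have happ : ∀ (T : Matrix ι' ι' ℝ) (p r : ι'), (Qᵀ * T * Q) (g p) (g r) = T p r := by
    intro T p r
    rw [key, Finset.sum_eq_single r]
    · rw [Finset.sum_eq_single p]
      · simp
      · intro b _ hb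
        rw [if_neg]
        exact fun hc => hb (hginj hc.1)
      · intro hmem; exact absurd (Finset.mem_univ _) hmem
    · intro b _ hb
      refine Finset.sum_eq_zero fun p' _ => ?_
      rw [if_neg]
      exact fun hc => hb (hginj hc.2)
    · intro hmem; exact absurd (Finset.mem_univ _) hmem
  have happ0 : ∀ (T : Matrix ι' ι' ℝ) (i j : ι), (i = j₀ ∨ j = j₀) → (Qᵀ * T * Q) i j = 0 := by
    intro T i j h
    rw [key]
    refine Finset.sum_eq_zero fun r _ => Finset.sum_eq_zero fun p _ => ?_
    rw [if_neg]
    rintro ⟨h1, h2⟩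
    rcases h with h | h
    · exact hgne p (h ▸ h1)
    · exact hgne r (h ▸ h2)
  have hMeq : M = Qᵀ * (M.submatrix g g) * Q := by
    ext i j
    rcases eq_or_ne i j₀ with hi | hi
    · subst hi; rw [hzero, happ0 _ _ _ (Or.inl rfl)]
    · rcases eq_or_ne j j₀ with hj | hj
      · subst hj; rw [hzero', happ0 _ _ _ (Or.inr rfl)]
      · obtain ⟨p, hp⟩ := hsurj i hi
        obtain ⟨r, hr⟩ := hsurj j hj
        subst hp; subst hr
        rw [happ, submatrix_apply]
  refine ⟨Qᵀ * P * Q, Qᵀ * N * Q, ?_, ?_, ?_⟩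
  · have hps := hP.conjTranspose_mul_mul_same Q
    rwa [conjTranspose_eq_transpose_of_trivial] at hps
  · intro i j
    rw [key]
    refine Finset.sum_nonneg fun r _ => Finset.sum_nonneg fun p _ => ?_
    split_ifs
    · exact hN p r
    · exact le_refl 0
  · rw [hMeq, hPN, Matrix.mul_add, Matrix.add_mul]

end SPNAux

namespace SPNAux

open Sum

variable {ι ι' : Type*} [Fintype ι] [DecidableEq ι] [Fintype ι'] [DecidableEq ι']

def Hyp (k n : ℕ) (M : Matrix (Fin k ⊕ Fin n) (Fin k ⊕ Fin n) ℝ) : Prop :=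
  M.IsSymm ∧
  (∀ i i' : Fin k, i ≠ i' → M (inl i) (inl i') ≤ 0) ∧
  (∀ (i : Fin k) (j : Fin n), M (inl i) (inr j) ≤ 0) ∧
  (∀ (i : Fin k) (j l : Fin n), j ≤ l → M (inl i) (inr j) ≤ M (inl i) (inr l)) ∧
  (∀ j l j' l' : Fin n, j ≤ j' → l ≤ l' → j ≠ l → j' ≠ l' →
      M (inr j) (inr l) ≤ M (inr j') (inr l'))

lemma hyp_symm_apply {k n : ℕ} {M : Matrix (Fin k ⊕ Fin n) (Fin k ⊕ Fin n) ℝ}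
    (h : M.IsSymm) (p r : Fin k ⊕ Fin n) : M r p = M p r := by
  have := congrFun (congrFun h p) r
  simpa using this

lemma mul_le_mul_nonpos {a b c d : ℝ} (hab : a ≤ b) (hb : b ≤ 0) (hcd : c ≤ d) (hd : d ≤ 0) :
    b * d ≤ a * c := by nlinarith

lemma hyp_restrict {k n k' n' : ℕ} {M : Matrix (Fin k ⊕ Fin n) (Fin k ⊕ Fin n) ℝ}
    (hyp : Hyp k n M) (f : Fin k' → Fin k) (h : Fin n' → Fin n)
    (hf : Function.Injective f) (hh : StrictMono h) :
    Hyp k' n' (M.submatrix (Sum.map f h) (Sum.map f h)) := by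
  obtain ⟨hs, hA, hB, hBm, hC⟩ := hyp
  refine ⟨?_, ?_, ?_, ?_, ?_⟩
  · rw [Matrix.IsSymm, transpose_submatrix, hs]
  · intro i i' hne
    exact hA (f i) (f i') (fun hc => hne (hf hc))
  · intro i j
    exact hB (f i) (h j)
  · intro i j l hjl
    exact hBm (f i) (h j) (h l) (hh.monotone hjl)
  · intro j l j' l' h1 h2 h3 h4
    exact hC (h j) (h l) (h j') (h l') (hh.monotone h1) (hh.monotone h2)
      (fun hc => h3 (hh.injective hc)) (fun hc => h4 (hh.injective hc))

lemma hyp_sub {k n : ℕ} {S : Matrix (Fin k ⊕ Fin n) (Fin k ⊕ Fin n) ℝ}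
    (hS : Hyp k n S) (w : Fin k ⊕ Fin n → ℝ)
    (hw : ∀ p, w p ≤ 0) (hwmono : ∀ j l : Fin n, j ≤ l → w (inr j) ≤ w (inr l))
    {c : ℝ} (hc : 0 ≤ c) : Hyp k n (S - c • vecMulVec w w) := by
  obtain ⟨hs, hA, hB, hBm, hC⟩ := hS
  have hsym : ∀ p r, S r p = S p r := hyp_symm_apply hs
  have hprod : ∀ p r, 0 ≤ w p * w r := by
    intro p r
    have := mul_nonneg (neg_nonneg.2 (hw p)) (neg_nonneg.2 (hw r))
    rw [neg_mul_neg] at this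
    exact this
  have happly : ∀ p r, (S - c • vecMulVec w w) p r = S p r - c * (w p * w r) := by
    intro p r
    simp [Matrix.sub_apply, vecMulVec, Matrix.smul_apply, smul_eq_mul]
  refine ⟨?_, ?_, ?_, ?_, ?_⟩
  · show _ᵀ = _
    ext p r
    rw [transpose_apply, happly, happly, hsym p r]
    ring
  · intro i i' hne
    rw [happly]
    have h1 := hA i i' hne
    have h2 := mul_nonneg hc (hprod (inl i) (inl i'))
    linarith
  · intro i j
    rw [happly]
    have h1 := hB i j
    have h2 := mul_nonneg hc (hprod (inl i) (inr j))
    linarith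
  · intro i j l hjl
    rw [happly, happly]
    have h1 := hBm i j l hjl
    have h2 : (-(c * w (inl i))) * w (inr j) ≤ (-(c * w (inl i))) * w (inr l) := by
      apply mul_le_mul_of_nonneg_left (hwmono j l hjl)
      have := mul_nonpos_of_nonneg_of_nonpos hc (hw (inl i))
      linarith
    nlinarith [h2]
  · intro j l j' l' h1 h2 h3 h4
    rw [happly, happly]
    have h5 := hC j l j' l' h1 h2 h3 h4
    have h6 : w (inr j') * w (inr l') ≤ w (inr j) * w (inr l) :=
      mul_le_mul_nonpos (hwmono j j' h1) (hw (inr j')) (hwmono l l' h2) (hw (inr l'))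
    have h7 := mul_le_mul_of_nonneg_left h6 hc
    linarith

lemma sub_submatrix {k n k' n' : ℕ} (M : Matrix (Fin k ⊕ Fin n) (Fin k ⊕ Fin n) ℝ)
    (q : Fin k ⊕ Fin n → ℝ) (c : ℝ) (g : Fin k' ⊕ Fin n' → Fin k ⊕ Fin n) :
    (M - c • vecMulVec q q).submatrix g g
      = M.submatrix g g - c • vecMulVec (q ∘ g) (q ∘ g) := by
  ext p r
  simp [submatrix_apply, Matrix.sub_apply, vecMulVec, Matrix.smul_apply, smul_eq_mul]

end SPNAux

namespace SPNAux

variable {ι ι' : Type*} [Fintype ι] [DecidableEq ι] [Fintype ι'] [DecidableEq ι']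

lemma isSymm_apply' {M : Matrix ι ι ℝ} (h : M.IsSymm) (p r : ι) : M r p = M p r := by
  have := congrFun (congrFun h p) r
  simpa using this

lemma spn_peel_nonneg {M : Matrix ι ι ℝ} {j₀ : ι} (g : ι' → ι)
    (hginj : Function.Injective g) (hgne : ∀ p, g p ≠ j₀)
    (hsurj : ∀ i, i ≠ j₀ → ∃ p, g p = i)
    (hsymm : M.IsSymm) (hcop : Copositive M)
    (hcol : ∀ p, 0 ≤ M p j₀)
    (hspn : Copositive (M.submatrix g g) → SPN (M.submatrix g g)) : SPN M := by
  have hz1 : ∀ p, zeroOut M j₀ j₀ p = 0 := by intro p; simp [zeroOut]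
  have hz2 : ∀ p, zeroOut M j₀ p j₀ = 0 := by intro p; simp [zeroOut]
  have hrestr : (zeroOut M j₀).submatrix g g = M.submatrix g g := by
    ext p r
    simp [zeroOut, submatrix_apply, hgne p, hgne r]
  have h0 : SPN (zeroOut M j₀) := by
    apply spn_extend g hginj hgne hsurj hz1 hz2
    rw [hrestr]
    exact hspn (copos_submatrix hcop g)
  rw [zeroOut_decomp M j₀]
  exact spn_add_nonneg h0 (zeroOut_rest_nonneg hsymm hcol)

lemma spn_peel {M : Matrix ι ι ℝ} {j₀ : ι} (g : ι' → ι)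
    (hginj : Function.Injective g) (hgne : ∀ p, g p ≠ j₀)
    (hsurj : ∀ i, i ≠ j₀ → ∃ p, g p = i)
    (hsymm : M.IsSymm) (hcop : Copositive M)
    (hqneg : ∀ p, p ≠ j₀ → M p j₀ ≤ 0)
    (hspn : ∀ c : ℝ, 0 ≤ c →
        Copositive ((M - c • vecMulVec (fun p => M p j₀) (fun p => M p j₀)).submatrix g g) →
        SPN ((M - c • vecMulVec (fun p => M p j₀) (fun p => M p j₀)).submatrix g g)) :
    SPN M := by
  by_cases hγ : M j₀ j₀ = 0
  · have hcol : ∀ p, 0 ≤ M p j₀ := copos_col_nonneg_of_diag_zero hcop hsymm hγ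
    refine spn_peel_nonneg g hginj hgne hsurj hsymm hcop hcol ?_
    intro hcop'
    have e : (M - (0:ℝ) • vecMulVec (fun p => M p j₀) (fun p => M p j₀)).submatrix g g
        = M.submatrix g g := by
      ext p r; simp
    have := hspn 0 le_rfl (by rw [e]; exact hcop')
    rwa [e] at this
  · have hγpos : 0 < M j₀ j₀ := lt_of_le_of_ne (copos_diag hcop j₀) (Ne.symm hγ)
    have hcinv : (0:ℝ) ≤ (M j₀ j₀)⁻¹ := inv_nonneg.2 (le_of_lt hγpos)
    set H := M - (M j₀ j₀)⁻¹ • vecMulVec (fun p => M p j₀) (fun p => M p j₀) with hH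
    have hHcop : Copositive H := peel_copos hcop hsymm hγpos hqneg
    have hHsymm : H.IsSymm := peel_sub_isSymm hsymm _
    have hHzero' : ∀ p, H p j₀ = 0 := peel_zero_col hγ
    have hHzero : ∀ p, H j₀ p = 0 := fun p => by
      rw [isSymm_apply' hHsymm p j₀]
      exact hHzero' p
    have hHspn : SPN H :=
      spn_extend g hginj hgne hsurj hHzero hHzero'
        (hspn _ hcinv (copos_submatrix hHcop g))
    rw [peel_decomp (M := M) (j₀ := j₀) (M j₀ j₀)⁻¹]
    exact spn_add_posSemidef hHspn (vecMulVec_posSemidef hcinv)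

end SPNAux

namespace SPNAux

open Sum

lemma spn_empty (M : Matrix (Fin 0 ⊕ Fin 0) (Fin 0 ⊕ Fin 0) ℝ) : SPN M := by
  refine ⟨0, M, Matrix.PosSemidef.zero, ?_, (zero_add M).symm⟩
  intro i j
  rcases i with i | i <;> exact i.elim0

lemma main (size k n : ℕ) (hle : k + n ≤ size)
    (M : Matrix (Fin k ⊕ Fin n) (Fin k ⊕ Fin n) ℝ) (hyp : Hyp k n M) (hcop : Copositive M) :
    SPN M := by
  induction size generalizing k n M with
  | zero =>
    have hk : k = 0 := by omega
    have hn : n = 0 := by omega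
    subst hk; subst hn
    exact spn_empty M
  | succ size IH =>
    obtain ⟨hsymm, hA, hB, hBm, hC⟩ := hyp
    have hsym := isSymm_apply' hsymm
    cases k with
    | succ k' =>
      have hginj : Function.Injective
          ((Sum.map Fin.succ id) : Fin k' ⊕ Fin n → Fin (k' + 1) ⊕ Fin n) :=
        Function.Injective.sumMap (Fin.succ_injective _) (fun a b h => h)
      have hgne : ∀ p : Fin k' ⊕ Fin n,
          ((Sum.map Fin.succ id) : Fin k' ⊕ Fin n → Fin (k' + 1) ⊕ Fin n) p ≠ inl 0 := by
        rintro (i | j) h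
        · rw [Sum.map_inl] at h
          exact Fin.succ_ne_zero i (by injection h)
        · simp at h
      have hsurj : ∀ i : Fin (k' + 1) ⊕ Fin n, i ≠ inl 0 →
          ∃ p : Fin k' ⊕ Fin n,
            ((Sum.map Fin.succ id) : Fin k' ⊕ Fin n → Fin (k' + 1) ⊕ Fin n) p = i := by
        rintro (i | j) h
        · have hi : i ≠ 0 := fun hc => h (by rw [hc])
          exact ⟨inl (i.pred hi), by simp [Fin.succ_pred]⟩
        · exact ⟨inr j, rfl⟩
      have hqneg : ∀ p, p ≠ inl 0 → M p (inl 0) ≤ 0 := by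
        rintro (i | j) h
        · exact hA i 0 (fun hc => h (by rw [hc]))
        · rw [hsym (inl 0) (inr j)]
          exact hB 0 j
      refine spn_peel (j₀ := inl 0) (Sum.map Fin.succ id) hginj hgne hsurj hsymm hcop hqneg ?_
      intro c hc hcop'
      rw [sub_submatrix] at hcop' ⊢
      refine IH k' n (by omega) _ ?_ hcop'
      refine hyp_sub (hyp_restrict ⟨hsymm, hA, hB, hBm, hC⟩ Fin.succ id
        (Fin.succ_injective _) strictMono_id) _ ?_ ?_ hc
      · rintro (i | j)
        · show M (inl i.succ) (inl 0) ≤ 0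
          exact hA i.succ 0 (Fin.succ_ne_zero i)
        · show M (inr j) (inl 0) ≤ 0
          rw [hsym (inl 0) (inr j)]
          exact hB 0 j
      · intro j l hjl
        show M (inr j) (inl 0) ≤ M (inr l) (inl 0)
        rw [hsym (inl 0) (inr j), hsym (inl 0) (inr l)]
        exact hBm 0 j l hjl
    | zero =>
      cases n with
      | zero => exact spn_empty M
      | succ n' =>
        by_cases hpos : ∃ l : Fin (n' + 1), l ≠ 0 ∧ 0 < M (inr 0) (inr l)
        · obtain ⟨l, hl0, hlpos⟩ := hpos
          have hginj : Function.Injective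
              ((Sum.map id Fin.castSucc) : Fin 0 ⊕ Fin n' → Fin 0 ⊕ Fin (n' + 1)) :=
            Function.Injective.sumMap (fun a b h => h) (Fin.castSucc_injective _)
          have hgne : ∀ p : Fin 0 ⊕ Fin n',
              ((Sum.map id Fin.castSucc) : Fin 0 ⊕ Fin n' → Fin 0 ⊕ Fin (n' + 1)) p
                ≠ inr (Fin.last n') := by
            rintro (i | j) h
            · exact i.elim0
            · rw [Sum.map_inr] at h
              exact (Fin.castSucc_lt_last j).ne (by injection h)
          have hsurj : ∀ i : Fin 0 ⊕ Fin (n' + 1), i ≠ inr (Fin.last n') →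
              ∃ p : Fin 0 ⊕ Fin n',
                ((Sum.map id Fin.castSucc) : Fin 0 ⊕ Fin n' → Fin 0 ⊕ Fin (n' + 1)) p = i := by
            rintro (i | j) h
            · exact i.elim0
            · have hj : j ≠ Fin.last n' := fun hc => h (by rw [hc])
              exact ⟨inr (j.castPred hj), by simp [Fin.castSucc_castPred]⟩
          have hcol : ∀ p, 0 ≤ M p (inr (Fin.last n')) := by
            rintro (i | j)
            · exact i.elim0
            · rcases eq_or_ne j (Fin.last n') with hj | hj
              · rw [hj]; exact copos_diag hcop _
              · have := hC 0 l j (Fin.last n') (Fin.zero_le j) (Fin.le_last l)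
                  (Ne.symm hl0) hj
                linarith
          refine spn_peel_nonneg (Sum.map id Fin.castSucc) hginj hgne hsurj hsymm hcop hcol ?_
          intro hcop'
          exact IH 0 n' (by omega) _ (hyp_restrict ⟨hsymm, hA, hB, hBm, hC⟩ id Fin.castSucc
            (fun a b h => h) Fin.strictMono_castSucc) hcop'
        · push_neg at hpos
          have hginj : Function.Injective
              ((Sum.map id Fin.succ) : Fin 0 ⊕ Fin n' → Fin 0 ⊕ Fin (n' + 1)) :=
            Function.Injective.sumMap (fun a b h => h) (Fin.succ_injective _)
          have hgne : ∀ p : Fin 0 ⊕ Fin n',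
              ((Sum.map id Fin.succ) : Fin 0 ⊕ Fin n' → Fin 0 ⊕ Fin (n' + 1)) p ≠ inr 0 := by
            rintro (i | j) h
            · exact i.elim0
            · rw [Sum.map_inr] at h
              exact Fin.succ_ne_zero j (by injection h)
          have hsurj : ∀ i : Fin 0 ⊕ Fin (n' + 1), i ≠ inr 0 →
              ∃ p : Fin 0 ⊕ Fin n',
                ((Sum.map id Fin.succ) : Fin 0 ⊕ Fin n' → Fin 0 ⊕ Fin (n' + 1)) p = i := by
            rintro (i | j) h
            · exact i.elim0
            · have hj : j ≠ 0 := fun hc => h (by rw [hc])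
              exact ⟨inr (j.pred hj), by simp [Fin.succ_pred]⟩
          have hqneg : ∀ p, p ≠ inr 0 → M p (inr 0) ≤ 0 := by
            rintro (i | j) h
            · exact i.elim0
            · have hj : j ≠ 0 := fun hc => h (by rw [hc])
              rw [hsym (inr 0) (inr j)]
              exact hpos j hj
          refine spn_peel (j₀ := inr 0) (Sum.map id Fin.succ) hginj hgne hsurj hsymm hcop hqneg ?_
          intro c hc hcop'
          rw [sub_submatrix] at hcop' ⊢
          refine IH 0 n' (by omega) _ ?_ hcop'
          refine hyp_sub (hyp_restrict ⟨hsymm, hA, hB, hBm, hC⟩ id Fin.succ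
            (fun a b h => h) Fin.strictMono_succ) _ ?_ ?_ hc
          · rintro (i | j)
            · exact i.elim0
            · show M (inr j.succ) (inr 0) ≤ 0
              rw [hsym (inr 0) (inr j.succ)]
              exact hpos j.succ (Fin.succ_ne_zero j)
          · intro j l hjl
            show M (inr j.succ) (inr 0) ≤ M (inr l.succ) (inr 0)
            exact hC j.succ 0 l.succ 0 (Fin.succ_le_succ_iff.mpr hjl) le_rfl
              (Fin.succ_ne_zero j) (Fin.succ_ne_zero l)

end SPNAux

theorem stmt_13 {k n : ℕ} (A : Matrix (Fin k) (Fin k) ℝ) (B : Matrix (Fin k) (Fin n) ℝ)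
    (C : Matrix (Fin n) (Fin n) ℝ) (hA : A.IsSymm) (hC : C.IsSymm)
    (hAoff : ∀ i j : Fin k, i ≠ j → A i j ≤ 0)
    (hBnonpos : ∀ i j, B i j ≤ 0)
    (hBrows : ∀ (i : Fin k) (j l : Fin n), j ≤ l → B i j ≤ B i l)
    (hCMn : Mn C)
    (hcop : Copositive (Matrix.fromBlocks A B Bᵀ C)) :
    SPN (Matrix.fromBlocks A B Bᵀ C) := by
  apply SPNAux.main (k + n) k n le_rfl _ _ hcop
  refine ⟨?_, ?_, ?_, ?_, ?_⟩
  · show (Matrix.fromBlocks A B Bᵀ C)ᵀ = Matrix.fromBlocks A B Bᵀ C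
    rw [fromBlocks_transpose, transpose_transpose, hA, hC]
  · intro i i' h
    simpa using hAoff i i' h
  · intro i j
    simpa using hBnonpos i j
  · intro i j l hjl
    simpa using hBrows i j l hjl
  · intro j l j' l' h1 h2 h3 h4
    simpa using hCMn j l j' l' h1 h2 h3 h4
end

section
/- Let v ∈ ℝ^n (n ≥ 2) be a vector with v₁ < 0 and v_i > 0 for all i ≥ 2. Then there exist a diagonal matrix D with positive diagonal entries such that D (vv^T) D ∈ ℳ_n, i.e., the rank-one matrix vv^T lies in the orbit of ℳ_n under positive diagonal rescaling; in particular vv^T is SPN. -/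
open Matrix

theorem stmt_16 {n : ℕ} (v : Fin (n + 2) → ℝ) (hv0 : v 0 < 0)
    (hvi : ∀ i : Fin (n + 2), i ≠ 0 → 0 < v i) :
    (∃ d : Fin (n + 2) → ℝ, (∀ i, 0 < d i) ∧
      Mn (Matrix.diagonal d * Matrix.vecMulVec v v * Matrix.diagonal d)) ∧
    SPN (Matrix.vecMulVec v v) := by
  have hvne : ∀ i : Fin (n + 2), v i ≠ 0 := by
    intro i
    rcases eq_or_ne i 0 with h | h
    · rw [h]; exact ne_of_lt hv0
    · exact ne_of_gt (hvi i h)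
  set s : Fin (n + 2) → ℝ := fun i => |v i|⁻¹ * v i with hs
  have hsval : ∀ i, (i = 0 ∧ s i = -1) ∨ (i ≠ 0 ∧ s i = 1) := by
    intro i
    rcases eq_or_ne i 0 with h | h
    · left; refine ⟨h, ?_⟩
      simp only [hs, h, abs_of_neg hv0]
      field_simp
      rw [div_self (hvne 0)]
    · right; refine ⟨h, ?_⟩
      simp only [hs, abs_of_pos (hvi i h)]
      field_simp
      exact div_self (hvne i)
  constructor
  · refine ⟨fun i => |v i|⁻¹, fun i => inv_pos.mpr (abs_pos.mpr (hvne i)), ?_⟩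
    intro i j k l hik hjl hij hkl
    have entry : ∀ a b : Fin (n + 2),
        (Matrix.diagonal (fun i => |v i|⁻¹) * Matrix.vecMulVec v v *
          Matrix.diagonal (fun i => |v i|⁻¹)) a b = s a * s b := by
      intro a b
      simp only [Matrix.mul_diagonal, Matrix.diagonal_mul, Matrix.vecMulVec_apply, hs]
      ring
    rw [entry, entry]
    have hneg1 : ∀ a b : Fin n.succ.succ, -1 ≤ s a * s b := by
      intro a b
      rcases hsval a with ⟨_, ha⟩ | ⟨_, ha⟩ <;> rcases hsval b with ⟨_, hb⟩ | ⟨_, hb⟩ <;>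
        rw [ha, hb] <;> norm_num
    rcases hsval i with ⟨hi0, hi⟩ | ⟨hi0, hi⟩
    · rcases hsval j with ⟨hj0, _⟩ | ⟨_, hj⟩
      · exact absurd (hi0.trans hj0.symm) hij
      · rw [hi, hj]; simpa using hneg1 k l
    · rcases hsval j with ⟨hj0, hj⟩ | ⟨hj0, hj⟩
      · rw [hi, hj]; simpa using hneg1 k l
      · have hk0' : k ≠ 0 := by
          intro h
          exact hi0 (Fin.le_antisymm (h ▸ hik) (Fin.zero_le i))
        have hl0 : l ≠ 0 := by
          intro h
          exact hj0 (Fin.le_antisymm (h ▸ hjl) (Fin.zero_le j))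
        rcases hsval k with ⟨h, _⟩ | ⟨_, hk⟩
        · exact absurd h hk0'
        rcases hsval l with ⟨h, _⟩ | ⟨_, hl⟩
        · exact absurd h hl0
        rw [hi, hj, hk, hl]
  · refine ⟨Matrix.vecMulVec v v, 0, Matrix.posSemidef_iff_dotProduct_mulVec.mpr ⟨?_, ?_⟩, fun i j => le_refl 0, (add_zero _).symm⟩
    · ext i j
      simp [Matrix.vecMulVec_apply, mul_comm]
    · intro x
      have : x ⬝ᵥ (Matrix.vecMulVec v v).mulVec x = (v ⬝ᵥ x) * (v ⬝ᵥ x) := by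
        simp only [Matrix.mulVec, dotProduct, Matrix.vecMulVec_apply,
          Finset.sum_mul, Finset.mul_sum]
        rw [Finset.sum_comm]
        apply Finset.sum_congr rfl
        intro a _
        apply Finset.sum_congr rfl
        intro b _
        ring
      simp only [star_trivial]
      rw [this]
      exact mul_self_nonneg _
end

section
/- For n ≥ 4, let v = (−1, −1, 1, …, 1)^T ∈ ℝ^n. Then the positive semidefinite matrix A = vv^T is not an element of G_nℳ_n, i.e., there are no permutation matrix P and diagonal matrix D with positive diagonal such that (PD)^T A (PD) has off-diagonal entries nondecreasing in rows and columns. -/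
open Matrix

theorem stmt_17 {n : ℕ} (hn : 4 ≤ n) (v : Fin n → ℝ)
    (hv : v = fun i : Fin n => if (i : ℕ) < 2 then (-1 : ℝ) else 1) :
    ¬ ∃ (σ : Equiv.Perm (Fin n)) (d : Fin n → ℝ), (∀ i, 0 < d i) ∧
      Mn ((((Matrix.of fun i j => if σ i = j then (1 : ℝ) else 0) * Matrix.diagonal d)ᵀ *
            Matrix.vecMulVec v v) *
          ((Matrix.of fun i j => if σ i = j then (1 : ℝ) else 0) * Matrix.diagonal d)) := by
  rintro ⟨σ, d, hd, hM⟩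
  -- the vector u with B i j = u i * u j
  have key : ∀ i j : Fin n,
      ((((Matrix.of fun i j => if σ i = j then (1 : ℝ) else 0) * Matrix.diagonal d)ᵀ *
            Matrix.vecMulVec v v) *
          ((Matrix.of fun i j => if σ i = j then (1 : ℝ) else 0) * Matrix.diagonal d)) i j
        = (v (σ.symm i) * d i) * (v (σ.symm j) * d j) := by
    intro i j
    have hX : ∀ a b : Fin n, ((Matrix.of fun i j => if σ i = j then (1 : ℝ) else 0) *
        Matrix.diagonal d) a b = if a = σ.symm b then d b else 0 := by
      intro a b
      simp [Matrix.mul_diagonal, Equiv.apply_eq_iff_eq_symm_apply, ite_mul]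
    simp only [Matrix.mul_apply, Matrix.transpose_apply, Matrix.vecMulVec_apply, hX,
      ite_mul, zero_mul, mul_ite, mul_zero, Finset.sum_ite_eq', Finset.mem_univ, if_true]
    ring
  set u : Fin n → ℝ := fun i => v (σ.symm i) * d i with hu
  have hM' : ∀ i j k l : Fin n, i ≤ k → j ≤ l → i ≠ j → k ≠ l →
      u i * u j ≤ u k * u l := by
    intro i j k l h1 h2 h3 h4
    have := hM i j k l h1 h2 h3 h4
    rwa [key, key] at this
  -- four corner indices, taken opaque with val facts
  obtain ⟨i0, e0⟩ : ∃ x : Fin n, (x : ℕ) = 0 := ⟨⟨0, by omega⟩, rfl⟩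
  obtain ⟨i1, e1⟩ : ∃ x : Fin n, (x : ℕ) = 1 := ⟨⟨1, by omega⟩, rfl⟩
  obtain ⟨i2, e2⟩ : ∃ x : Fin n, (x : ℕ) = n - 2 := ⟨⟨n - 2, by omega⟩, rfl⟩
  obtain ⟨i3, e3⟩ : ∃ x : Fin n, (x : ℕ) = n - 1 := ⟨⟨n - 1, by omega⟩, rfl⟩
  -- the two negative indices
  obtain ⟨a, ha⟩ : ∃ x : Fin n, x = σ i0 := ⟨_, rfl⟩
  obtain ⟨b, hb⟩ : ∃ x : Fin n, x = σ i1 := ⟨_, rfl⟩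
  have hab : a ≠ b := by
    rw [ha, hb]
    intro h
    have := congrArg Fin.val (σ.injective h)
    omega
  have hsa : σ.symm a = i0 := by rw [ha]; simp
  have hsb : σ.symm b = i1 := by rw [hb]; simp
  have husymm : ∀ i : Fin n, u i = (if ((σ.symm i : Fin n) : ℕ) < 2 then (-1 : ℝ) else 1) * d i := by
    intro i; rw [hu, hv]
  have hna : u a < 0 := by
    rw [husymm, hsa, if_pos (by omega)]
    have := hd a; linarith
  have hnb : u b < 0 := by
    rw [husymm, hsb, if_pos (by omega)]
    have := hd b; linarith
  have hpos : ∀ i : Fin n, i ≠ a → i ≠ b → 0 < u i := by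
    intro i hia hib
    have h2 : ¬ ((σ.symm i : Fin n) : ℕ) < 2 := by
      intro hlt
      rcases (by omega : ((σ.symm i : Fin n) : ℕ) = 0 ∨ ((σ.symm i : Fin n) : ℕ) = 1) with h | h
      · exact hia (by rw [ha, ← σ.apply_symm_apply i]; exact congrArg σ (Fin.ext (by omega)))
      · exact hib (by rw [hb, ← σ.apply_symm_apply i]; exact congrArg σ (Fin.ext (by omega)))
    rw [husymm, if_neg h2, one_mul]
    exact hd i
  -- min fact
  have hmin : ∀ k l : Fin n, k ≠ l → u i0 * u i1 ≤ u k * u l := by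
    intro k l hkl
    rcases Nat.lt_or_ge (l : ℕ) 1 with hl | hl
    · have hk : (1 : ℕ) ≤ (k : ℕ) := by
        by_contra h
        exact hkl (Fin.ext (by omega))
      have := hM' i1 i0 k l (by rw [Fin.le_def]; omega) (by rw [Fin.le_def]; omega)
        (fun h => by have := congrArg Fin.val h; omega) hkl
      linarith [this, mul_comm (u i1) (u i0)]
    · exact hM' i0 i1 k l (by rw [Fin.le_def]; omega) (by rw [Fin.le_def]; omega)
        (fun h => by have := congrArg Fin.val h; omega) hkl
  -- max fact
  have hmax : ∀ k l : Fin n, k ≠ l → u k * u l ≤ u i2 * u i3 := by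
    intro k l hkl
    have hkv := k.isLt
    have hlv := l.isLt
    rcases Nat.lt_or_ge (k : ℕ) (n - 1) with hk | hk
    · exact hM' k l i2 i3 (by rw [Fin.le_def]; omega) (by rw [Fin.le_def]; omega) hkl
        (fun h => by have := congrArg Fin.val h; omega)
    · have hl : (l : ℕ) ≤ n - 2 := by
        by_contra h
        exact hkl (Fin.ext (by omega))
      have := hM' k l i3 i2 (by rw [Fin.le_def]; omega) (by rw [Fin.le_def]; omega) hkl
        (fun h => by have := congrArg Fin.val h; omega)
      linarith [this, mul_comm (u i3) (u i2)]
  -- a positive index distinct from a and b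
  obtain ⟨p, hpa, hpb⟩ : ∃ p : Fin n, p ≠ a ∧ p ≠ b := by
    by_contra h
    push_neg at h
    have hsub : (Finset.univ : Finset (Fin n)) ⊆ {a, b} := by
      intro x _
      simp only [Finset.mem_insert, Finset.mem_singleton]
      by_cases hxa : x = a
      · exact Or.inl hxa
      · exact Or.inr (h x hxa)
    have h1 := Finset.card_le_card hsub
    have h2 : ({a, b} : Finset (Fin n)).card ≤ 2 :=
      (Finset.card_insert_le _ _).trans (by simp)
    simp only [Finset.card_univ, Fintype.card_fin] at h1
    omega
  have hpp : 0 < u p := hpos p hpa hpb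
  have h01 : u i0 * u i1 < 0 :=
    lt_of_le_of_lt (hmin a p (fun h => hpa h.symm)) (mul_neg_of_neg_of_pos hna hpp)
  have h23 : 0 < u i2 * u i3 :=
    lt_of_lt_of_le (mul_pos_of_neg_of_neg hna hnb) (hmax a b hab)
  have hab' : (a : ℕ) ≠ (b : ℕ) := fun h => hab (Fin.ext h)
  -- u i3 is positive
  have hi3 : 0 < u i3 := by
    rcases mul_pos_iff.mp h23 with ⟨h2, h3⟩ | ⟨h2, h3⟩
    · exact h3
    · exfalso
      have hi2m : i2 = a ∨ i2 = b := by
        by_contra h; push_neg at h; linarith [hpos i2 h.1 h.2]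
      have hi3m : i3 = a ∨ i3 = b := by
        by_contra h; push_neg at h; linarith [hpos i3 h.1 h.2]
      have he : i0 = a ∨ i0 = b ∨ i1 = a ∨ i1 = b := by
        by_contra h; push_neg at h
        have p0 := hpos i0 h.1 h.2.1
        have p1 := hpos i1 h.2.2.1 h.2.2.2
        nlinarith
      rcases hi2m with h2m | h2m <;> rcases hi3m with h3m | h3m <;>
        rcases he with hem | hem | hem | hem <;>
        · have c1 := congrArg Fin.val h2m
          have c2 := congrArg Fin.val h3m
          have c3 := congrArg Fin.val hem
          omega
  -- a negative index among i0, i1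
  obtain ⟨e, hev, hen⟩ : ∃ e : Fin n, (e : ℕ) ≤ 1 ∧ u e < 0 := by
    rcases mul_neg_iff.mp h01 with ⟨h0, h1⟩ | ⟨h0, h1⟩
    · exact ⟨i1, by omega, h1⟩
    · exact ⟨i0, by omega, h0⟩
  have hem : e = a ∨ e = b := by
    by_contra h; push_neg at h; linarith [hpos e h.1 h.2]
  -- the other negative index c
  obtain ⟨c, hcn, hce⟩ : ∃ c : Fin n, u c < 0 ∧ c ≠ e := by
    rcases hem with rfl | rfl
    · exact ⟨b, hnb, fun h => hab h.symm⟩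
    · exact ⟨a, hna, hab⟩
  have hce' : (c : ℕ) ≠ (e : ℕ) := fun hh => hce (Fin.ext hh)
  have hc2 : 2 ≤ (c : ℕ) := by
    by_contra h
    push_neg at h
    have hc01 : c = i0 ∨ c = i1 := by
      rcases (by omega : (c : ℕ) = 0 ∨ (c : ℕ) = 1) with h' | h'
      · exact Or.inl (Fin.ext (by omega))
      · exact Or.inr (Fin.ext (by omega))
    have he01 : e = i0 ∨ e = i1 := by
      rcases (by omega : (e : ℕ) = 0 ∨ (e : ℕ) = 1) with h' | h'
      · exact Or.inl (Fin.ext (by omega))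
      · exact Or.inr (Fin.ext (by omega))
    rcases hc01 with rfl | rfl <;> rcases he01 with rfl | rfl <;>
      first
        | exact hce' rfl
        | nlinarith [mul_pos_of_neg_of_neg hcn hen, mul_pos_of_neg_of_neg hen hcn, h01]
  have hci3 : c ≠ i3 := fun h => by rw [h] at hcn; linarith
  have hcv := c.isLt
  have hfin := hM' e c c i3 (by rw [Fin.le_def]; omega) (by rw [Fin.le_def]; omega)
    (fun h => hce h.symm) hci3
  nlinarith [mul_pos_of_neg_of_neg hen hcn, mul_neg_of_neg_of_pos hcn hi3]
end

section
/- Let A be a symmetric n×n matrix and suppose there exists a vector d ∈ ℝ^n with d_i ≥ 1 for all i satisfying d_k a_{ik} − d_j a_{ij} ≥ 0 for all triples i, j, k with j < k, i ≠ j, i ≠ k. Then D = diag(d₁,…,d_n) satisfies DAD ∈ ℳ_n; conversely, if DAD ∈ ℳ_n for some diagonal D with positive diagonal, such a vector d exists. -/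
open Matrix

theorem stmt_18 {n : ℕ} (A : Matrix (Fin n) (Fin n) ℝ) (hA : A.IsSymm) :
    (∀ d : Fin n → ℝ, (∀ i, 1 ≤ d i) →
      (∀ i j k : Fin n, j < k → i ≠ j → i ≠ k → 0 ≤ d k * A i k - d j * A i j) →
      Mn (Matrix.diagonal d * A * Matrix.diagonal d)) ∧
    ((∃ d : Fin n → ℝ, (∀ i, 0 < d i) ∧ Mn (Matrix.diagonal d * A * Matrix.diagonal d)) →
      ∃ d : Fin n → ℝ, (∀ i, 1 ≤ d i) ∧
        ∀ i j k : Fin n, j < k → i ≠ j → i ≠ k → 0 ≤ d k * A i k - d j * A i j) := by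
  have hsym : ∀ a b : Fin n, A b a = A a b := fun a b => hA.apply a b
  constructor
  · intro d hd1 hcond i j k l hik hjl hij hkl
    have hdpos : ∀ i, (0:ℝ) < d i := fun i => lt_of_lt_of_le one_pos (hd1 i)
    have hstep : ∀ a b c : Fin n, b < c → a ≠ b → a ≠ c →
        d b * A a b ≤ d c * A a c := by
      intro a b c hbc hab hac
      have := hcond a b c hbc hab hac
      linarith
    simp only [Matrix.mul_diagonal, Matrix.diagonal_mul]
    rcases eq_or_lt_of_le hjl with rfl | hjl'
    · rcases eq_or_lt_of_le hik with rfl | hik'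
      · exact le_refl _
      · have h1 := hstep j i k hik' (Ne.symm hij) (Ne.symm hkl)
        rw [hsym i j, hsym k j] at h1
        nlinarith [hdpos j, h1]
    · by_cases hil : i = l
      · subst hil
        have hik' : i < k := lt_of_le_of_ne hik (fun h => hkl (h.symm ▸ rfl))
        have hjk : j ≠ k := ne_of_lt (lt_trans hjl' hik')
        have h1 := hstep j i k hik' (Ne.symm hij) hjk
        have h2 := hstep k j i hjl' (Ne.symm hjk) hkl
        rw [hsym i j, hsym k j] at h1
        nlinarith [hdpos j, hdpos k, h1, h2, mul_le_mul_of_nonneg_left h1 (le_of_lt (hdpos j)), mul_le_mul_of_nonneg_left h2 (le_of_lt (hdpos k))]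
      · have h1 := hstep i j l hjl' hij hil
        rcases eq_or_lt_of_le hik with rfl | hik'
        · nlinarith [hdpos i, h1]
        · have h2 := hstep l i k hik' (Ne.symm hil) (Ne.symm hkl)
          rw [hsym i l, hsym k l] at h2
          nlinarith [hdpos i, hdpos l, h1, h2, mul_le_mul_of_nonneg_left h1 (le_of_lt (hdpos i)), mul_le_mul_of_nonneg_left h2 (le_of_lt (hdpos l))]
  · rintro ⟨d, hdpos, hM⟩
    rcases Nat.eq_zero_or_pos n with rfl | hn
    · exact ⟨fun i => 1, fun i => i.elim0, fun i => i.elim0⟩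
    · have hne : (Finset.univ : Finset (Fin n)).Nonempty := ⟨⟨0, hn⟩, Finset.mem_univ _⟩
      set m := Finset.univ.inf' hne d with hm
      have hmpos : 0 < m := by
        obtain ⟨i, _, hi⟩ := Finset.exists_mem_eq_inf' hne d
        rw [hm, hi]; exact hdpos i
      refine ⟨fun i => d i / m, fun i => ?_, fun i j k hjk hij hik => ?_⟩
      · show 1 ≤ d i / m
        rw [le_div_iff₀ hmpos, one_mul]
        exact Finset.inf'_le d (Finset.mem_univ i)
      · have h := hM i j i k (le_refl i) (le_of_lt hjk) hij hik
        simp only [Matrix.mul_diagonal, Matrix.diagonal_mul] at h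
        have h2 : A i j * d j ≤ A i k * d k := by
          have := (mul_le_mul_iff_right₀ (hdpos i)).mp (by linarith : d i * (A i j * d j) ≤ d i * (A i k * d k))
          linarith
        have : 0 ≤ (d k * A i k - d j * A i j) / m := by
          apply div_nonneg _ (le_of_lt hmpos)
          linarith
        calc (0:ℝ) ≤ (d k * A i k - d j * A i j) / m := this
          _ = d k / m * A i k - d j / m * A i j := by ring
end
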